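/- arXiv:1902.01171 — 5 statements merged into one kernel-verified Lean document; each statement's English description precedes it below -/
import Mathlib

section
/- For the random walk on a finite connected weighted graph G = (V,E,C) and any two distinct vertices x, y ∈ V, the quantity (U_w^{xy} + U_w^{yx})/μ_w is independent of the vertex w ∈ V; that is, there is a constant R_{xy} (the effective resistance between x and y) such that U_w^{xy} + U_w^{yx} = R_{xy} · μ_w for all w ∈ V. -/
open Finset

variable {V : Type*} [Fintype V] [DecidableEq V]

/-- The weight (generalized degree) of a node: `μ_x = ∑_y c x y`. -/
noncomputable def nodeWeight (c : V → V → ℝ) (x : V) : ℝ := ∑ y, c x y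

/-- Transition probabilities of the random walk: `p x y = c x y / μ x`. -/
noncomputable def transProb (c : V → V → ℝ) (x y : V) : ℝ := c x y / nodeWeight c x

/-- The transition matrix killed at the target node `y` (rows at `y` set to zero), so that
`(killed c y ^ n) x z = P^x(X_0 ≠ y, …, X_{n-1} ≠ y, X_n = z)`. -/
noncomputable def killed (c : V → V → ℝ) (y : V) : Matrix V V ℝ :=
  Matrix.of fun u v => if u = y then 0 else transProb c u v

/-- The survival probability `P^x(τ_y > n)` of the walk started at `x`. -/
noncomputable def survival (c : V → V → ℝ) (x y : V) (n : ℕ) : ℝ :=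
  ∑ z ∈ Finset.univ.erase y, (killed c y ^ n) x z

/-- The expected hitting time `E^x(τ_y) = ∑_{n ≥ 0} P^x(τ_y > n)`. -/
noncomputable def hitExp (c : V → V → ℝ) (x y : V) : ℝ := ∑' n : ℕ, survival c x y n

/-- `U_z^{xy}`: the expected number of times `0 ≤ k < τ_y` with `X_k = z`, for the walk
started at `x`. -/
noncomputable def visitExp (c : V → V → ℝ) (x y z : V) : ℝ :=
  if z = y then 0 else ∑' n : ℕ, (killed c y ^ n) x z

set_option linter.unusedSectionVars false

section Aux
variable (c : V → V → ℝ) (t : V)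

lemma killed_nonneg (hnn : ∀ u v, 0 ≤ c u v) (hw : ∀ u, 0 < nodeWeight c u) (u v : V) :
    0 ≤ killed c t u v := by
  unfold killed transProb
  simp only [Matrix.of_apply]
  split
  · exact le_refl 0
  · exact div_nonneg (hnn u v) (hw u).le

lemma killed_pow_nonneg (hnn : ∀ u v, 0 ≤ c u v) (hw : ∀ u, 0 < nodeWeight c u)
    (n : ℕ) (u v : V) : 0 ≤ (killed c t ^ n) u v := by
  induction n generalizing u v with
  | zero => simp only [pow_zero, Matrix.one_apply]; split <;> norm_num
  | succ n ih =>
    rw [pow_succ, Matrix.mul_apply]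
    exact Finset.sum_nonneg fun i _ => mul_nonneg (ih u i) (killed_nonneg c t hnn hw i v)

lemma killed_rowsum (hw : ∀ u, 0 < nodeWeight c u) (u : V) :
    ∑ z, killed c t u z = if u = t then 0 else 1 := by
  unfold killed transProb
  simp only [Matrix.of_apply]
  split
  · simp
  · rw [← Finset.sum_div, ← nodeWeight, div_self (hw u).ne']

lemma survival_nonneg (hnn : ∀ u v, 0 ≤ c u v) (hw : ∀ u, 0 < nodeWeight c u) (u : V) (n : ℕ) :
    0 ≤ survival c u t n :=
  Finset.sum_nonneg fun z _ => killed_pow_nonneg c t hnn hw n u z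

lemma T_split (u : V) (n : ℕ) :
    ∑ z, (killed c t ^ n) u z = (killed c t ^ n) u t + survival c u t n :=
  (Finset.add_sum_erase _ _ (mem_univ t)).symm

lemma T_succ (hw : ∀ u, 0 < nodeWeight c u) (u : V) (n : ℕ) :
    ∑ z, (killed c t ^ (n + 1)) u z = survival c u t n := by
  simp only [pow_succ, Matrix.mul_apply]
  rw [Finset.sum_comm]
  have h1 : ∀ v, ∑ z, (killed c t ^ n) u v * killed c t v z
      = (killed c t ^ n) u v * (if v = t then 0 else 1) := by
    intro v
    rw [← Finset.mul_sum, killed_rowsum c t hw]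
  simp only [h1, mul_ite, mul_zero, mul_one]
  rw [show survival c u t n = ∑ v ∈ univ.erase t, (killed c t ^ n) u v from rfl]
  rw [← Finset.sum_erase (f := fun v => if v = t then 0 else (killed c t ^ n) u v) (a := t) univ
    (by simp)]
  exact Finset.sum_congr rfl fun v hv => by rw [if_neg (mem_erase.mp hv).1]

lemma survival_zero (u : V) : survival c u t 0 = if u = t then 0 else 1 := by
  unfold survival
  simp only [pow_zero, Matrix.one_apply]
  rw [Finset.sum_ite_eq]
  simp only [mem_erase, mem_univ, and_true]
  by_cases h : u = t <;> simp [h]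

lemma survival_succ_le (hnn : ∀ u v, 0 ≤ c u v) (hw : ∀ u, 0 < nodeWeight c u) (u : V) (n : ℕ) :
    survival c u t (n + 1) ≤ survival c u t n := by
  rw [← T_succ c t hw u n]
  exact Finset.sum_le_sum_of_subset_of_nonneg (subset_univ _)
    (fun z _ _ => killed_pow_nonneg c t hnn hw _ u z)

lemma survival_anti (hnn : ∀ u v, 0 ≤ c u v) (hw : ∀ u, 0 < nodeWeight c u) (u : V) :
    Antitone (survival c u t) :=
  antitone_nat_of_succ_le (survival_succ_le c t hnn hw u)

lemma survival_le_one (hnn : ∀ u v, 0 ≤ c u v) (hw : ∀ u, 0 < nodeWeight c u) (u : V) (n : ℕ) :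
    survival c u t n ≤ 1 := by
  have h := survival_anti c t hnn hw u (Nat.zero_le n)
  rw [survival_zero] at h
  split at h <;> linarith

lemma survival_target (n : ℕ) : survival c t t n = 0 := by
  cases n with
  | zero => rw [survival_zero]; simp
  | succ n =>
    unfold survival
    rw [pow_succ']
    apply Finset.sum_eq_zero
    intro z _
    rw [Matrix.mul_apply]
    apply Finset.sum_eq_zero
    intro v _
    have h : killed c t t v = 0 := by simp [killed]
    rw [h, zero_mul]

lemma survival_add (u : V) (m n : ℕ) :
    survival c u t (m + n) = ∑ v, (killed c t ^ m) u v * survival c v t n := by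
  unfold survival
  simp only [pow_add, Matrix.mul_apply, Finset.mul_sum]
  exact Finset.sum_comm

lemma hit_partial (hw : ∀ u, 0 < nodeWeight c u) (u : V) (n : ℕ) :
    ∑ k ∈ Finset.range (n + 1), (killed c t ^ k) u t = 1 - survival c u t n := by
  induction n with
  | zero =>
    rw [survival_zero]
    rw [Finset.sum_range_one, pow_zero, Matrix.one_apply]
    split <;> norm_num
  | succ n ih =>
    rw [Finset.sum_range_succ, ih]
    have h1 : (killed c t ^ (n + 1)) u t = survival c u t n - survival c u t (n + 1) := by
      have h2 := T_split c t u (n + 1)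
      rw [T_succ c t hw u n] at h2
      linarith
    rw [h1]; ring

lemma exists_survival_lt_one (hsym : ∀ u v, c u v = c v u) (hnn : ∀ u v, 0 ≤ c u v)
    (hconn : (SimpleGraph.fromRel fun u v : V => 0 < c u v).Connected)
    (hw : ∀ u, 0 < nodeWeight c u) (v : V) : ∃ n, survival c v t n < 1 := by
  suffices H : ∀ (a b : V), (SimpleGraph.fromRel fun u v : V => 0 < c u v).Walk a b →
      (∃ n, survival c b t n < 1) → ∃ n, survival c a t n < 1 by
    obtain ⟨p⟩ := hconn.preconnected v t
    exact H v t p ⟨0, by rw [survival_target]; norm_num⟩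
  intro a b p
  induction p with
  | nil => exact id
  | cons h q ih =>
    rename_i a w b
    intro hb
    obtain ⟨n, hn⟩ := ih hb
    by_cases ha : a = t
    · exact ⟨0, by rw [ha, survival_target]; norm_num⟩
    have hcab : 0 < c a w := by
      rw [SimpleGraph.fromRel_adj] at h
      rcases h.2 with h' | h'
      · exact h'
      · exact (hsym a w) ▸ h'
    have hQab : 0 < killed c t a w := by
      unfold killed transProb
      simp only [Matrix.of_apply, if_neg ha]
      exact div_pos hcab (hw a)
    refine ⟨n + 1, ?_⟩
    have hdec : survival c a t (1 + n) = ∑ u, killed c t a u * survival c u t n := by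
      have h2 := survival_add c t a 1 n
      simpa [pow_one] using h2
    rw [Nat.add_comm n 1, hdec]
    have hlt : ∑ u, killed c t a u * survival c u t n
        < ∑ u, killed c t a u * 1 := by
      apply Finset.sum_lt_sum
      · intro i _
        exact mul_le_mul_of_nonneg_left (survival_le_one c t hnn hw i n)
          (killed_nonneg c t hnn hw a i)
      · exact ⟨w, mem_univ w, by
          apply mul_lt_mul_of_pos_left _ hQab
          exact hn⟩
    calc ∑ u, killed c t a u * survival c u t n
        < ∑ u, killed c t a u * 1 := hlt
      _ = 1 := by simp only [mul_one]; rw [killed_rowsum c t hw, if_neg ha]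

lemma exists_uniform_bound [Nonempty V] (hsym : ∀ u v, c u v = c v u)
    (hnn : ∀ u v, 0 ≤ c u v)
    (hconn : (SimpleGraph.fromRel fun u v : V => 0 < c u v).Connected)
    (hw : ∀ u, 0 < nodeWeight c u) :
    ∃ N : ℕ, ∃ q : ℝ, 1 ≤ N ∧ 0 ≤ q ∧ q < 1 ∧ ∀ v, survival c v t N ≤ q := by
  choose f hf using exists_survival_lt_one c t hsym hnn hconn hw
  refine ⟨max 1 (Finset.univ.sup f),
    Finset.univ.sup' Finset.univ_nonempty (fun v => survival c v t (max 1 (Finset.univ.sup f))),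
    le_max_left _ _, ?_, ?_, ?_⟩
  · exact le_trans (survival_nonneg c t hnn hw (Classical.arbitrary V) _)
      (Finset.le_sup' (fun v => survival c v t (max 1 (Finset.univ.sup f))) (mem_univ _))
  · refine (Finset.sup'_lt_iff _).mpr fun v _ => ?_
    refine lt_of_le_of_lt (survival_anti c t hnn hw v ?_) (hf v)
    exact le_trans (Finset.le_sup (mem_univ v)) (le_max_right _ _)
  · exact fun v => Finset.le_sup' (fun v => survival c v t (max 1 (Finset.univ.sup f)))
      (mem_univ v)
lemma survival_block (hnn : ∀ u v, 0 ≤ c u v) (hw : ∀ u, 0 < nodeWeight c u)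
    (N : ℕ) (q : ℝ) (hq0 : 0 ≤ q) (hqb : ∀ v, survival c v t N ≤ q) :
    ∀ k u, survival c u t (N * k) ≤ q ^ k := by
  intro k
  induction k with
  | zero =>
    intro u
    rw [Nat.mul_zero, pow_zero, survival_zero]
    split <;> norm_num
  | succ k ih =>
    intro u
    have h1 : survival c u t (N * (k + 1)) = ∑ v, (killed c t ^ N) u v * survival c v t (N * k) := by
      rw [show N * (k + 1) = N + N * k by ring]
      exact survival_add c t u N (N * k)
    rw [h1, ← Finset.sum_erase (a := t) univ (by rw [survival_target, mul_zero])]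
    calc ∑ v ∈ univ.erase t, (killed c t ^ N) u v * survival c v t (N * k)
        ≤ ∑ v ∈ univ.erase t, (killed c t ^ N) u v * q ^ k := by
          refine Finset.sum_le_sum fun v _ => ?_
          exact mul_le_mul_of_nonneg_left (ih v) (killed_pow_nonneg c t hnn hw N u v)
      _ = survival c u t N * q ^ k := by
          rw [← Finset.sum_mul]; rfl
      _ ≤ q * q ^ k := mul_le_mul_of_nonneg_right (hqb u) (pow_nonneg hq0 k)
      _ = q ^ (k + 1) := (pow_succ' q k).symm

lemma partial_sum_bound (hnn : ∀ u v, 0 ≤ c u v) (hw : ∀ u, 0 < nodeWeight c u)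
    (N : ℕ) (q : ℝ) (hN1 : 1 ≤ N) (hq0 : 0 ≤ q) (hq1 : q < 1)
    (hqb : ∀ v, survival c v t N ≤ q) (u : V) (n : ℕ) :
    ∑ i ∈ Finset.range n, survival c u t i ≤ (1 - q)⁻¹ * N := by
  have hblocks : ∀ K : ℕ, ∑ i ∈ Finset.range (N * K), survival c u t i
      ≤ (∑ k ∈ Finset.range K, q ^ k) * N := by
    intro K
    induction K with
    | zero => simp
    | succ K ih =>
      rw [show N * (K + 1) = N * K + N by ring, Finset.sum_range_add,
        Finset.sum_range_succ, add_mul]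
      refine add_le_add ih ?_
      calc ∑ i ∈ Finset.range N, survival c u t (N * K + i)
          ≤ ∑ _i ∈ Finset.range N, q ^ K := by
            refine Finset.sum_le_sum fun i _ => ?_
            exact le_trans (survival_anti c t hnn hw u (Nat.le_add_right _ _))
              (survival_block c t hnn hw N q hq0 hqb K u)
        _ = q ^ K * N := by
            rw [Finset.sum_const, Finset.card_range, nsmul_eq_mul, mul_comm]
  have hsub : ∑ i ∈ Finset.range n, survival c u t i
      ≤ ∑ i ∈ Finset.range (N * n), survival c u t i := by
    refine Finset.sum_le_sum_of_subset_of_nonneg ?_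
      (fun i _ _ => survival_nonneg c t hnn hw u i)
    exact Finset.range_subset_range.mpr (Nat.le_mul_of_pos_left n (lt_of_lt_of_le Nat.zero_lt_one hN1))
  refine le_trans hsub (le_trans (hblocks n) ?_)
  have hgeom : ∑ k ∈ Finset.range n, q ^ k ≤ (1 - q)⁻¹ := by
    rw [← tsum_geometric_of_lt_one hq0 hq1]
    exact Summable.sum_le_tsum _ (fun k _ => pow_nonneg hq0 k)
      (summable_geometric_of_lt_one hq0 hq1)
  have hN0 : (0 : ℝ) ≤ N := Nat.cast_nonneg N
  exact mul_le_mul_of_nonneg_right hgeom hN0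

lemma summable_survival [Nonempty V] (hsym : ∀ u v, c u v = c v u)
    (hnn : ∀ u v, 0 ≤ c u v)
    (hconn : (SimpleGraph.fromRel fun u v : V => 0 < c u v).Connected)
    (hw : ∀ u, 0 < nodeWeight c u) (u : V) :
    Summable (fun n => survival c u t n) := by
  obtain ⟨N, q, hN1, hq0, hq1, hqb⟩ := exists_uniform_bound c t hsym hnn hconn hw
  exact summable_of_sum_range_le (fun n => survival_nonneg c t hnn hw u n)
    (fun n => partial_sum_bound c t hnn hw N q hN1 hq0 hq1 hqb u n)

lemma survival_tendsto_zero [Nonempty V] (hsym : ∀ u v, c u v = c v u)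
    (hnn : ∀ u v, 0 ≤ c u v)
    (hconn : (SimpleGraph.fromRel fun u v : V => 0 < c u v).Connected)
    (hw : ∀ u, 0 < nodeWeight c u) (u : V) :
    Filter.Tendsto (fun n => survival c u t n) Filter.atTop (nhds 0) :=
  (summable_survival c t hsym hnn hconn hw u).tendsto_atTop_zero

lemma summable_entry [Nonempty V] (hsym : ∀ u v, c u v = c v u)
    (hnn : ∀ u v, 0 ≤ c u v)
    (hconn : (SimpleGraph.fromRel fun u v : V => 0 < c u v).Connected)
    (hw : ∀ u, 0 < nodeWeight c u) (u z : V) :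
    Summable (fun n => (killed c t ^ n) u z) := by
  by_cases hz : z = t
  · rw [show z = t from hz]
    refine summable_of_sum_range_le (c := 1)
      (fun n => killed_pow_nonneg c t hnn hw n u t) ?_
    intro n
    cases n with
    | zero => simp
    | succ n =>
      rw [hit_partial c t hw u n]
      linarith [survival_nonneg c t hnn hw u n]
  · refine Summable.of_nonneg_of_le (fun n => killed_pow_nonneg c t hnn hw n u z)
      (fun n => ?_) (summable_survival c t hsym hnn hconn hw u)
    exact Finset.single_le_sum (fun i _ => killed_pow_nonneg c t hnn hw n u i)
      (Finset.mem_erase.mpr ⟨hz, mem_univ z⟩)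

lemma tsum_entry_target [Nonempty V] (hsym : ∀ u v, c u v = c v u)
    (hnn : ∀ u v, 0 ≤ c u v)
    (hconn : (SimpleGraph.fromRel fun u v : V => 0 < c u v).Connected)
    (hw : ∀ u, 0 < nodeWeight c u) (u : V) (hu : u ≠ t) :
    ∑' n, (killed c t ^ n) u t = 1 := by
  have hs := summable_entry c t hsym hnn hconn hw u t
  have h1 : Filter.Tendsto (fun n => ∑ k ∈ Finset.range n, (killed c t ^ k) u t)
      Filter.atTop (nhds (∑' n, (killed c t ^ n) u t)) := hs.hasSum.tendsto_sum_nat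
  have h2 : Filter.Tendsto (fun n => ∑ k ∈ Finset.range (n + 1), (killed c t ^ k) u t)
      Filter.atTop (nhds (∑' n, (killed c t ^ n) u t)) :=
    h1.comp (Filter.tendsto_add_atTop_nat 1)
  have h3 : Filter.Tendsto (fun n => 1 - survival c u t n) Filter.atTop (nhds 1) := by
    have := (survival_tendsto_zero c t hsym hnn hconn hw u).const_sub 1
    simpa using this
  have h4 : (fun n => ∑ k ∈ Finset.range (n + 1), (killed c t ^ k) u t)
      = fun n => 1 - survival c u t n := funext fun n => hit_partial c t hw u n
  rw [h4] at h2
  exact tendsto_nhds_unique h2 h3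

lemma green_eq [Nonempty V] (hsym : ∀ u v, c u v = c v u)
    (hnn : ∀ u v, 0 ≤ c u v)
    (hconn : (SimpleGraph.fromRel fun u v : V => 0 < c u v).Connected)
    (hw : ∀ u, 0 < nodeWeight c u) (x w : V) :
    ∑' n, (killed c t ^ n) x w
      = (if x = w then 1 else 0)
        + ∑ v, (∑' n, (killed c t ^ n) x v) * killed c t v w := by
  have hsum : ∀ z, Summable (fun n => (killed c t ^ n) x z) :=
    fun z => summable_entry c t hsym hnn hconn hw x z
  rw [Summable.tsum_eq_zero_add (hsum w)]
  refine congrArg₂ (· + ·) ?_ ?_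
  · simp [Matrix.one_apply]
  have h1 : ∀ n : ℕ, (killed c t ^ (n + 1)) x w
      = ∑ v, (killed c t ^ n) x v * killed c t v w :=
    fun n => by rw [pow_succ, Matrix.mul_apply]
  simp only [h1]
  rw [Summable.tsum_finsetSum (fun v _ => (hsum v).mul_right _)]
  exact Finset.sum_congr rfl fun v _ => tsum_mul_right


lemma nodeWeight_pos (c : V → V → ℝ) (hsym : ∀ u v, c u v = c v u) (hnn : ∀ u v, 0 ≤ c u v)
    (hconn : (SimpleGraph.fromRel fun u v : V => 0 < c u v).Connected)
    [Nontrivial V] (u : V) : 0 < nodeWeight c u := by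
  obtain ⟨v, hv⟩ := exists_ne u
  obtain ⟨p⟩ := hconn.preconnected u v
  have hex : ∃ w, 0 < c u w := by
    cases p with
    | nil => exact absurd rfl hv.symm
    | cons h q =>
      rename_i w
      rw [SimpleGraph.fromRel_adj] at h
      rcases h.2 with h' | h'
      · exact ⟨w, h'⟩
      · exact ⟨w, (hsym u w) ▸ h'⟩
  obtain ⟨w, hw⟩ := hex
  exact Finset.sum_pos' (fun i _ => hnn u i) ⟨w, mem_univ w, hw⟩

end Aux

/-- For the random walk on a finite connected weighted graph and any two
distinct vertices `x ≠ y`, the quantity `(U_w^{xy} + U_w^{yx})/μ_w` is independent of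
`w ∈ V`: there is a constant `R` (the effective resistance between `x` and `y`) such that
`U_w^{xy} + U_w^{yx} = R · μ_w` for all `w ∈ V`. -/
theorem round_trip_visits_proportional_to_weight
    (c : V → V → ℝ) (hsym : ∀ u v, c u v = c v u) (hnn : ∀ u v, 0 ≤ c u v)
    (hconn : (SimpleGraph.fromRel fun u v : V => 0 < c u v).Connected)
    (x y : V) (hxy : x ≠ y) :
    ∃ R : ℝ, ∀ w : V, visitExp c x y w + visitExp c y x w = R * nodeWeight c w := by
  haveI : Nontrivial V := ⟨⟨x, y, hxy⟩⟩
  have hw : ∀ u, 0 < nodeWeight c u := nodeWeight_pos c hsym hnn hconn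
  have hrow : ∀ a, ∑ z, transProb c a z = 1 := by
    intro a
    unfold transProb
    rw [← Finset.sum_div, ← nodeWeight, div_self (hw a).ne']
  have htp : ∀ a b, 0 ≤ transProb c a b := fun a b => div_nonneg (hnn a b) (hw a).le
  have hG1y : (∑' n, (killed c y ^ n) x y) = 1 :=
    tsum_entry_target c y hsym hnn hconn hw x hxy
  have hG2x : (∑' n, (killed c x ^ n) y x) = 1 :=
    tsum_entry_target c x hsym hnn hconn hw y hxy.symm
  set f : V → ℝ := fun w => visitExp c x y w + visitExp c y x w with hf
  -- one-sided balance equations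
  have ha : ∀ w, ∑ v, visitExp c x y v * transProb c v w
      = visitExp c x y w + (if w = y then 1 else 0) - (if x = w then 1 else 0) := by
    intro w
    have h1 : ∀ v, visitExp c x y v * transProb c v w
        = (∑' n, (killed c y ^ n) x v) * killed c y v w := by
      intro v
      by_cases hv : v = y
      · simp [visitExp, killed, hv]
      · simp [visitExp, killed, hv]
    rw [Finset.sum_congr rfl (fun v _ => h1 v)]
    have h2 := green_eq c y hsym hnn hconn hw x w
    have h3 : visitExp c x y w
        = (∑' n, (killed c y ^ n) x w) - (if w = y then 1 else 0) := by
      by_cases hwy : w = y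
      · simp [visitExp, hwy, hG1y]
      · simp [visitExp, hwy]
    rw [h3]
    linarith [h2]
  have hb : ∀ w, ∑ v, visitExp c y x v * transProb c v w
      = visitExp c y x w + (if w = x then 1 else 0) - (if y = w then 1 else 0) := by
    intro w
    have h1 : ∀ v, visitExp c y x v * transProb c v w
        = (∑' n, (killed c x ^ n) y v) * killed c x v w := by
      intro v
      by_cases hv : v = x
      · simp [visitExp, killed, hv]
      · simp [visitExp, killed, hv]
    rw [Finset.sum_congr rfl (fun v _ => h1 v)]
    have h2 := green_eq c x hsym hnn hconn hw y w
    have h3 : visitExp c y x w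
        = (∑' n, (killed c x ^ n) y w) - (if w = x then 1 else 0) := by
      by_cases hwx : w = x
      · simp [visitExp, hwx, hG2x]
      · simp [visitExp, hwx]
    rw [h3]
    linarith [h2]
  -- stationarity of f
  have key : ∀ w, ∑ v, f v * transProb c v w = f w := by
    intro w
    have hsplit : ∑ v, f v * transProb c v w
        = (∑ v, visitExp c x y v * transProb c v w)
          + ∑ v, visitExp c y x v * transProb c v w := by
      rw [← Finset.sum_add_distrib]
      exact Finset.sum_congr rfl fun v _ => by rw [hf]; ring
    rw [hsplit, ha w, hb w, hf]
    have e1 : (if w = y then (1:ℝ) else 0) = (if y = w then 1 else 0) := by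
      by_cases h : w = y
      · simp [h]
      · rw [if_neg h, if_neg fun hh : y = w => h hh.symm]
    have e2 : (if w = x then (1:ℝ) else 0) = (if x = w then 1 else 0) := by
      by_cases h : w = x
      · simp [h]
      · rw [if_neg h, if_neg fun hh : x = w => h hh.symm]
    rw [e1, e2]
    ring
  -- the density f w / μ w is harmonic
  set h : V → ℝ := fun w => f w / nodeWeight c w with hh
  have hharm : ∀ v, ∑ w, transProb c v w * h w = h v := by
    intro v
    have hpt : ∀ w', transProb c v w' * h w'
        = (f w' * transProb c w' v) / nodeWeight c v := by
      intro w'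
      rw [hh]
      unfold transProb
      rw [hsym v w']
      field_simp
    rw [Finset.sum_congr rfl (fun w' _ => hpt w'), ← Finset.sum_div, key v, hh]
  -- maximum principle: h is constant
  obtain ⟨w0, _, hmax⟩ := Finset.exists_max_image Finset.univ h Finset.univ_nonempty
  have hstep : ∀ a b : V, (SimpleGraph.fromRel fun u v : V => 0 < c u v).Adj a b →
      h a = h w0 → h b = h w0 := by
    intro a b hab hha
    by_contra hne
    have hblt : h b < h w0 := lt_of_le_of_ne (hmax b (mem_univ b)) hne
    have hcab : 0 < c a b := by
      rw [SimpleGraph.fromRel_adj] at hab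
      rcases hab.2 with h' | h'
      · exact h'
      · exact (hsym a b) ▸ h'
    have hpab : 0 < transProb c a b := div_pos hcab (hw a)
    have hlt : ∑ w, transProb c a w * h w < ∑ w, transProb c a w * h w0 := by
      apply Finset.sum_lt_sum
      · intro i _
        exact mul_le_mul_of_nonneg_left (hmax i (mem_univ i)) (htp a i)
      · exact ⟨b, mem_univ b, mul_lt_mul_of_pos_left hblt hpab⟩
    rw [hharm a, hha] at hlt
    rw [← Finset.sum_mul, hrow a, one_mul] at hlt
    exact lt_irrefl _ hlt
  have hconst : ∀ w, h w = h w0 := by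
    intro w
    suffices H : ∀ (a b : V), (SimpleGraph.fromRel fun u v : V => 0 < c u v).Walk a b →
        h a = h w0 → h b = h w0 by
      obtain ⟨p⟩ := hconn.preconnected w0 w
      exact H w0 w p rfl
    intro a b p
    induction p with
    | nil => exact id
    | cons hadj q ih => exact fun haa => ih (hstep _ _ hadj haa)
  refine ⟨h w0, fun w => ?_⟩
  have hcw := hconst w
  have hmu : nodeWeight c w ≠ 0 := (hw w).ne'
  have hfw : f w = h w * nodeWeight c w := by
    have hdef : h w = f w / nodeWeight c w := rfl
    rw [hdef, div_mul_cancel₀ _ hmu]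
  rw [show visitExp c x y w + visitExp c y x w = f w from rfl, hfw, hcw]
end

section
/- Commute time formula: for the random walk on a finite connected weighted graph G = (V,E,C) and distinct vertices x, y ∈ V, the expected commute time satisfies E^x(τ_y) + E^y(τ_x) = R_{xy} · ∑_{w ∈ V} μ_w, where R_{xy} = (U_x^{xy} + U_x^{yx})/μ_x is the effective resistance between x and y. -/
open Finset

variable {V : Type*} [Fintype V] [DecidableEq V]

/-- The effective resistance between `x` and `y`: `R_{xy} = (U_x^{xy} + U_x^{yx})/μ_x`. -/
noncomputable def effRes (c : V → V → ℝ) (x y : V) : ℝ :=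
  (visitExp c x y x + visitExp c y x x) / nodeWeight c x


set_option linter.unusedSectionVars false
set_option maxHeartbeats 1000000

namespace CommuteAux

variable (c : V → V → ℝ)

lemma nodeWeight_nonneg (hnn : ∀ u v, 0 ≤ c u v) (u : V) : 0 ≤ nodeWeight c u :=
  Finset.sum_nonneg fun v _ => hnn u v

lemma transProb_nonneg (hnn : ∀ u v, 0 ≤ c u v) (u v : V) : 0 ≤ transProb c u v :=
  div_nonneg (hnn u v) (nodeWeight_nonneg c hnn u)

lemma killed_nonneg (hnn : ∀ u v, 0 ≤ c u v) (y u v : V) : 0 ≤ killed c y u v := by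
  unfold killed
  simp only [Matrix.of_apply]
  split
  · exact le_refl 0
  · exact transProb_nonneg c hnn u v

lemma kpow_nonneg (hnn : ∀ u v, 0 ≤ c u v) (y : V) :
    ∀ (n : ℕ) (u v : V), 0 ≤ (killed c y ^ n) u v := by
  intro n
  induction n with
  | zero => intro u v; rw [pow_zero, Matrix.one_apply]; split <;> norm_num
  | succ n ih =>
    intro u v
    rw [pow_succ, Matrix.mul_apply]
    exact Finset.sum_nonneg fun w _ => mul_nonneg (ih u w) (killed_nonneg c hnn y w v)

lemma killed_y_row (y v : V) : killed c y y v = 0 := by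
  unfold killed; simp

lemma kpow_y_row (y : V) : ∀ (n : ℕ) (v : V), v ≠ y → (killed c y ^ n) y v = 0 := by
  intro n v hv
  cases n with
  | zero => rw [pow_zero]; exact Matrix.one_apply_ne (Ne.symm hv)
  | succ n =>
    rw [pow_succ', Matrix.mul_apply]
    apply Finset.sum_eq_zero
    intro w _
    rw [killed_y_row, zero_mul]

lemma kpow_succ_y_row (y : V) (n : ℕ) (v : V) : (killed c y ^ (n+1)) y v = 0 := by
  rw [pow_succ', Matrix.mul_apply]
  apply Finset.sum_eq_zero
  intro w _
  rw [killed_y_row, zero_mul]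

lemma mu_pos [Nontrivial V] (hsym : ∀ u v, c u v = c v u) (hnn : ∀ u v, 0 ≤ c u v)
    (hconn : (SimpleGraph.fromRel fun u v : V => 0 < c u v).Connected) (u : V) :
    0 < nodeWeight c u := by
  obtain ⟨v, hv⟩ := exists_ne u
  obtain ⟨p⟩ := hconn.preconnected u v
  cases p with
  | nil => exact absurd rfl (Ne.symm hv)
  | @cons _ w _ h q =>
    rw [SimpleGraph.fromRel_adj] at h
    have hc : 0 < c u w := by
      rcases h.2 with h' | h'
      · exact h'
      · rw [hsym]; exact h'
    have : c u w ≤ nodeWeight c u :=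
      Finset.single_le_sum (f := fun i => c u i) (fun i _ => hnn u i) (mem_univ w)
    linarith

lemma sum_killed_row [Nontrivial V] (hsym : ∀ u v, c u v = c v u) (hnn : ∀ u v, 0 ≤ c u v)
    (hconn : (SimpleGraph.fromRel fun u v : V => 0 < c u v).Connected) (y u : V) :
    ∑ v, killed c y u v = if u = y then 0 else 1 := by
  unfold killed
  simp only [Matrix.of_apply]
  split
  · simp
  · unfold transProb
    rw [← Finset.sum_div]
    exact div_self (ne_of_gt (mu_pos c hsym hnn hconn u))


lemma survival_nonneg (hnn : ∀ u v, 0 ≤ c u v) (y u : V) (n : ℕ) :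
    0 ≤ survival c u y n :=
  Finset.sum_nonneg fun z _ => kpow_nonneg c hnn y n u z

lemma survival_zero (y u : V) : survival c u y 0 = if u = y then 0 else 1 := by
  unfold survival
  rw [pow_zero]
  split
  · rename_i h
    apply Finset.sum_eq_zero
    intro z hz
    rw [h]
    exact Matrix.one_apply_ne (Ne.symm (Finset.ne_of_mem_erase hz))
  · rename_i h
    have : ∀ z ∈ Finset.univ.erase y, (1 : Matrix V V ℝ) u z = if z = u then 1 else 0 := by
      intro z _
      rw [Matrix.one_apply]
      simp [eq_comm]
    rw [Finset.sum_congr rfl this, Finset.sum_ite_eq' (Finset.univ.erase y) u fun _ => (1:ℝ)]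
    simp [h]

lemma survival_y (y : V) (n : ℕ) : survival c y y n = 0 := by
  apply Finset.sum_eq_zero
  intro z hz
  exact kpow_y_row c y n z (Finset.ne_of_mem_erase hz)


variable [Nontrivial V] (hsym : ∀ u v, c u v = c v u) (hnn : ∀ u v, 0 ≤ c u v)
    (hconn : (SimpleGraph.fromRel fun u v : V => 0 < c u v).Connected)

include hsym hnn hconn

lemma killed_apply_ne (y u v : V) (hu : u ≠ y) :
    killed c y u v = c u v / nodeWeight c u := by
  unfold killed transProb; simp [hu]

lemma mul_killed (y u v : V) (hu : u ≠ y) :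
    nodeWeight c u * killed c y u v = c u v := by
  rw [killed_apply_ne c hsym hnn hconn y u v hu]
  field_simp [ne_of_gt (mu_pos c hsym hnn hconn u)]

lemma rev (y : V) : ∀ (n : ℕ) (u v : V), u ≠ y → v ≠ y →
    nodeWeight c u * (killed c y ^ n) u v = nodeWeight c v * (killed c y ^ n) v u := by
  intro n
  induction n with
  | zero =>
    intro u v hu hv
    rw [pow_zero, Matrix.one_apply, Matrix.one_apply]
    rcases eq_or_ne u v with h | h
    · subst h; simp
    · simp [h, Ne.symm h]
  | succ n ih =>
    intro u v hu hv
    conv_lhs => rw [pow_succ]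
    conv_rhs => rw [pow_succ']
    rw [Matrix.mul_apply, Matrix.mul_apply, Finset.mul_sum, Finset.mul_sum]
    apply Finset.sum_congr rfl
    intro w _
    rcases eq_or_ne w y with h | h
    · rw [h, killed_y_row, kpow_y_row c y n u hu]
      ring
    · have h1 : nodeWeight c u * ((killed c y ^ n) u w * killed c y w v)
          = (nodeWeight c u * (killed c y ^ n) u w) * killed c y w v := by ring
      rw [h1, ih u w hu h]
      have h2 : nodeWeight c w * (killed c y ^ n) w u * killed c y w v
          = (nodeWeight c w * killed c y w v) * (killed c y ^ n) w u := by ring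
      rw [h2, mul_killed c hsym hnn hconn y w v h]
      have h3 : nodeWeight c v * (killed c y v w * (killed c y ^ n) w u)
          = (nodeWeight c v * killed c y v w) * (killed c y ^ n) w u := by ring
      rw [h3, mul_killed c hsym hnn hconn y v w hv, hsym]


lemma survival_succ (y u : V) (n : ℕ) :
    survival c u y n = survival c u y (n+1) + (killed c y ^ (n+1)) u y := by
  have key : ∑ z, (killed c y ^ (n+1)) u z = survival c u y n := by
    conv_lhs => rw [pow_succ]
    have : ∀ z, (killed c y ^ n * killed c y) u z = ∑ w, (killed c y ^ n) u w * killed c y w z :=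
      fun z => Matrix.mul_apply
    rw [Finset.sum_congr rfl fun z _ => this z, Finset.sum_comm]
    have : ∀ w, ∑ z, (killed c y ^ n) u w * killed c y w z
        = (killed c y ^ n) u w * (if w = y then 0 else 1) := by
      intro w
      rw [← Finset.mul_sum, sum_killed_row c hsym hnn hconn y w]
    rw [Finset.sum_congr rfl fun w _ => this w]
    unfold survival
    rw [← Finset.add_sum_erase _ _ (Finset.mem_univ y)]
    simp only [if_true, eq_self_iff_true, mul_zero, zero_add]
    apply Finset.sum_congr rfl
    intro w hw
    rw [if_neg (Finset.ne_of_mem_erase hw), mul_one]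
  rw [← key, ← Finset.add_sum_erase _ _ (Finset.mem_univ y)]
  unfold survival
  ring

lemma survival_antitone (y u : V) : ∀ {a b : ℕ}, a ≤ b → survival c u y b ≤ survival c u y a := by
  have step : ∀ n, survival c u y (n+1) ≤ survival c u y n := by
    intro n
    rw [survival_succ c hsym hnn hconn y u n]
    have := kpow_nonneg c hnn y (n+1) u y
    linarith
  intro a b hab
  exact antitone_nat_of_succ_le step hab

lemma survival_le_one (y u : V) (n : ℕ) : survival c u y n ≤ 1 := by
  have h0 : survival c u y 0 ≤ 1 := by
    rw [survival_zero]; split <;> norm_num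
  exact le_trans (survival_antitone c hsym hnn hconn y u (Nat.zero_le n)) h0

lemma chapman (y u : V) (n k : ℕ) :
    survival c u y (n + k) = ∑ w ∈ Finset.univ.erase y, (killed c y ^ n) u w * survival c w y k := by
  unfold survival
  rw [pow_add]
  have : ∀ z, (killed c y ^ n * killed c y ^ k) u z
      = ∑ w, (killed c y ^ n) u w * (killed c y ^ k) w z := fun z => Matrix.mul_apply
  rw [Finset.sum_congr rfl fun z _ => this z, Finset.sum_comm]
  have h2 : ∀ w, ∑ z ∈ Finset.univ.erase y, (killed c y ^ n) u w * (killed c y ^ k) w z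
      = (killed c y ^ n) u w * survival c w y k := by
    intro w
    rw [← Finset.mul_sum]
    rfl
  rw [Finset.sum_congr rfl fun w _ => h2 w, ← Finset.add_sum_erase _ _ (Finset.mem_univ y),
    survival_y, mul_zero, zero_add]
  apply Finset.sum_congr rfl
  intro w hw
  rfl


lemma kpow_pos_of_walk :
    ∀ (u z : V) (p : (SimpleGraph.fromRel fun a b : V => 0 < c a b).Walk u z),
      p.support.count z = 1 → 0 < (killed c z ^ p.length) u z := by
  intro u z p
  induction p with
  | nil =>
    intro _
    rw [SimpleGraph.Walk.length_nil, pow_zero, Matrix.one_apply_eq]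
    norm_num
  | @cons a w z h q ih =>
    intro hcount
    have hay : a ≠ z := by
      intro hh
      subst hh
      rw [SimpleGraph.Walk.support_cons, List.count_cons_self] at hcount
      have : 1 ≤ q.support.count a := List.count_pos_iff.mpr q.end_mem_support
      omega
    have hq : q.support.count z = 1 := by
      rw [SimpleGraph.Walk.support_cons, List.count_cons_of_ne hay] at hcount
      exact hcount
    have hpos := ih hq
    rw [SimpleGraph.Walk.length_cons, pow_succ', Matrix.mul_apply]
    have hterm : 0 < killed c z a w * (killed c z ^ q.length) w z := by
      apply mul_pos _ hpos
      rw [SimpleGraph.fromRel_adj] at h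
      have hc : 0 < c a w := by
        rcases h.2 with h' | h'
        · exact h'
        · rw [hsym]; exact h'
      unfold killed transProb
      simp only [Matrix.of_apply, if_neg hay]
      exact div_pos hc (mu_pos c hsym hnn hconn a)
    have hle : killed c z a w * (killed c z ^ q.length) w z
        ≤ ∑ v, killed c z a v * (killed c z ^ q.length) v z := by
      apply Finset.single_le_sum (f := fun v => killed c z a v * (killed c z ^ q.length) v z)
        (fun v _ => mul_nonneg (by
          unfold killed
          simp only [Matrix.of_apply]
          split
          · exact le_refl 0
          · exact div_nonneg (hnn a v) (Finset.sum_nonneg fun i _ => hnn a i))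
          (kpow_nonneg c hnn z q.length v z)) (Finset.mem_univ w)
    linarith

lemma exists_hit_pos (y u : V) (hu : u ≠ y) :
    ∃ n, 1 ≤ n ∧ 0 < (killed c y ^ n) u y := by
  obtain ⟨p⟩ := hconn.preconnected u y
  have hy : y ∈ p.support := p.end_mem_support
  set q := p.takeUntil y hy with hqdef
  have hcount : q.support.count y = 1 := p.count_support_takeUntil_eq_one hy
  refine ⟨q.length, ?_, kpow_pos_of_walk c hsym hnn hconn u y q hcount⟩
  rcases Nat.eq_zero_or_pos q.length with h0 | h1
  · exact absurd (q.eq_of_length_eq_zero h0) hu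
  · exact h1

lemma exists_contraction (y : V) :
    ∃ (m : ℕ) (r : ℝ), 1 ≤ m ∧ 0 ≤ r ∧ r < 1 ∧ ∀ u, survival c u y m ≤ r := by
  have key : ∀ u : V, ∃ n, 1 ≤ n ∧ survival c u y n < 1 := by
    intro u
    rcases eq_or_ne u y with rfl | hu
    · exact ⟨1, le_refl 1, by rw [survival_y]; norm_num⟩
    · obtain ⟨n, hn1, hpos⟩ := exists_hit_pos c hsym hnn hconn y u hu
      obtain ⟨k, rfl⟩ := Nat.exists_eq_add_of_le hn1
      refine ⟨1 + k, hn1, ?_⟩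
      have h1 := survival_succ c hsym hnn hconn y u k
      have h2 := survival_le_one c hsym hnn hconn y u k
      have : (killed c y ^ (k+1)) u y = (killed c y ^ (1+k)) u y := by rw [Nat.add_comm]
      rw [this] at h1
      have h3 : survival c u y (k + 1) = survival c u y (1 + k) := by rw [Nat.add_comm]
      rw [h3] at h1
      linarith
  choose f hf using key
  set m := max (Finset.univ.sup f) 1 with hm
  have hm1 : 1 ≤ m := le_max_right _ 1
  have hmono : ∀ u : V, survival c u y m ≤ survival c u y (f u) := fun u =>
    survival_antitone c hsym hnn hconn y u
      (le_trans (Finset.le_sup (Finset.mem_univ u)) (le_max_left _ _))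
  obtain ⟨u0, _, hmax⟩ := Finset.exists_max_image Finset.univ
    (fun u => survival c u y m) Finset.univ_nonempty
  refine ⟨m, survival c u0 y m, hm1, survival_nonneg c hnn y u0 m, ?_, fun u => hmax u (Finset.mem_univ u)⟩
  exact lt_of_le_of_lt (hmono u0) (hf u0).2

lemma survival_pow_le (y : V) (m : ℕ) (r : ℝ) (hr0 : 0 ≤ r)
    (hr : ∀ u, survival c u y m ≤ r) :
    ∀ (k : ℕ) (u : V), survival c u y (m * k) ≤ r ^ k := by
  intro k
  induction k with
  | zero => intro u; rw [Nat.mul_zero, pow_zero]; exact survival_le_one c hsym hnn hconn y u 0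
  | succ k ih =>
    intro u
    have : m * (k + 1) = m * k + m := by ring
    rw [this, chapman c hsym hnn hconn y u (m * k) m]
    have h1 : ∑ w ∈ Finset.univ.erase y, (killed c y ^ (m*k)) u w * survival c w y m
        ≤ ∑ w ∈ Finset.univ.erase y, (killed c y ^ (m*k)) u w * r := by
      apply Finset.sum_le_sum
      intro w _
      exact mul_le_mul_of_nonneg_left (hr w) (kpow_nonneg c hnn y (m*k) u w)
    have h2 : ∑ w ∈ Finset.univ.erase y, (killed c y ^ (m*k)) u w * r
        = survival c u y (m * k) * r := by
      rw [← Finset.sum_mul]; rfl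
    calc ∑ w ∈ Finset.univ.erase y, (killed c y ^ (m*k)) u w * survival c w y m
        ≤ survival c u y (m * k) * r := by rw [← h2]; exact h1
      _ ≤ r ^ k * r := mul_le_mul_of_nonneg_right (ih u) hr0
      _ = r ^ (k + 1) := (pow_succ r k).symm

lemma sum_range_survival_le (y u : V) (m : ℕ) (r : ℝ) (hm : 1 ≤ m) (hr0 : 0 ≤ r) (hr1 : r < 1)
    (hr : ∀ u, survival c u y m ≤ r) (N : ℕ) :
    ∑ n ∈ Finset.range N, survival c u y n ≤ m * (1 - r)⁻¹ := by
  have hmpos : 0 < m := hm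
  have step1 : ∀ n : ℕ, survival c u y n ≤ r ^ (n / m) := by
    intro n
    have h1 : m * (n / m) ≤ n := Nat.mul_div_le n m
    exact le_trans (survival_antitone c hsym hnn hconn y u h1)
      (survival_pow_le c hsym hnn hconn y m r hr0 hr (n / m) u)
  have step2 : ∑ n ∈ Finset.range N, survival c u y n ≤ ∑ n ∈ Finset.range N, r ^ (n / m) :=
    Finset.sum_le_sum fun n _ => step1 n
  have step3 : ∑ n ∈ Finset.range N, r ^ (n / m)
      = ∑ k ∈ (Finset.range N).image (· / m), ((Finset.range N).filter (fun n => n / m = k)).card • r ^ k :=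
    Finset.sum_comp (fun k => r ^ k) (· / m)
  have hcard : ∀ k : ℕ, ((Finset.range N).filter (fun n => n / m = k)).card ≤ m := by
    intro k
    have hsub : (Finset.range N).filter (fun n => n / m = k) ⊆ Finset.Ico (m * k) (m * k + m) := by
      intro n hn
      simp only [Finset.mem_filter, Finset.mem_range] at hn
      rw [Finset.mem_Ico]
      constructor
      · rw [← hn.2]; exact Nat.mul_div_le n m
      · have : n / m < k + 1 := by omega
        have h4 := (Nat.div_lt_iff_lt_mul hmpos).mp this
        have h5 : (k+1) * m = m * k + m := by ring
        omega
    calc ((Finset.range N).filter (fun n => n / m = k)).card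
        ≤ (Finset.Ico (m * k) (m * k + m)).card := Finset.card_le_card hsub
      _ = m := by rw [Nat.card_Ico]; omega
  have hgeom : Summable (fun k : ℕ => r ^ k) := summable_geometric_of_lt_one hr0 hr1
  have step4 : ∑ k ∈ (Finset.range N).image (· / m), ((Finset.range N).filter (fun n => n / m = k)).card • r ^ k
      ≤ ∑ k ∈ (Finset.range N).image (· / m), (m : ℝ) * r ^ k := by
    apply Finset.sum_le_sum
    intro k _
    rw [nsmul_eq_mul]
    exact mul_le_mul_of_nonneg_right (by exact_mod_cast hcard k) (pow_nonneg hr0 k)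
  have step5 : ∑ k ∈ (Finset.range N).image (· / m), (m : ℝ) * r ^ k
      = (m : ℝ) * ∑ k ∈ (Finset.range N).image (· / m), r ^ k := by
    rw [Finset.mul_sum]
  have step6 : ∑ k ∈ (Finset.range N).image (· / m), r ^ k ≤ ∑' k : ℕ, r ^ k :=
    Summable.sum_le_tsum _ (fun k _ => pow_nonneg hr0 k) hgeom
  rw [tsum_geometric_of_lt_one hr0 hr1] at step6
  have hm1 : (1 : ℝ) ≤ m := by exact_mod_cast hm
  calc ∑ n ∈ Finset.range N, survival c u y n
      ≤ ∑ k ∈ (Finset.range N).image (· / m), ((Finset.range N).filter (fun n => n / m = k)).card • r ^ k := by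
        rw [← step3]; exact step2
    _ ≤ (m : ℝ) * ∑ k ∈ (Finset.range N).image (· / m), r ^ k := by rw [← step5]; exact step4
    _ ≤ (m : ℝ) * (1 - r)⁻¹ := mul_le_mul_of_nonneg_left step6 (by positivity)

lemma summable_survival (y u : V) : Summable (fun n => survival c u y n) := by
  obtain ⟨m, r, hm, hr0, hr1, hr⟩ := exists_contraction c hsym hnn hconn y
  exact summable_of_sum_range_le (fun n => survival_nonneg c hnn y u n)
    (fun N => sum_range_survival_le c hsym hnn hconn y u m r hm hr0 hr1 hr N)


lemma sum_transProb (u : V) : ∑ v, transProb c u v = 1 := by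
  unfold transProb
  rw [← Finset.sum_div]
  exact div_self (ne_of_gt (mu_pos c hsym hnn hconn u))

lemma sum_range_kpow_y (y u : V) (hu : u ≠ y) (N : ℕ) :
    ∑ n ∈ Finset.range (N+1), (killed c y ^ n) u y = 1 - survival c u y N := by
  induction N with
  | zero =>
    rw [Finset.sum_range_one, pow_zero, Matrix.one_apply_ne hu, survival_zero, if_neg hu]
    norm_num
  | succ N ih =>
    rw [Finset.sum_range_succ, ih]
    have := survival_succ c hsym hnn hconn y u N
    linarith

lemma summable_kpow (y u z : V) : Summable (fun n => (killed c y ^ n) u z) := by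
  rcases eq_or_ne z y with rfl | hz
  · rcases eq_or_ne u z with rfl | hu
    · have hval : ∀ n, (killed c u ^ n) u u = if n = 0 then 1 else 0 := by
        intro n
        cases n with
        | zero => rw [pow_zero, Matrix.one_apply_eq]; simp
        | succ n => rw [kpow_succ_y_row]; simp
      apply Summable.congr (f := fun n => if n = 0 then (1:ℝ) else 0)
      · exact summable_of_ne_finset_zero (s := {0}) (by intro n hn; simp at hn ⊢; omega)
      · intro n; rw [hval]
    · apply summable_of_sum_range_le (c := 1) (fun n => kpow_nonneg c hnn z n u z)
      intro N
      cases N with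
      | zero => simp
      | succ N =>
        rw [sum_range_kpow_y c hsym hnn hconn z u hu N]
        have := survival_nonneg c hnn z u N
        linarith
  · apply Summable.of_nonneg_of_le (fun n => kpow_nonneg c hnn y n u z)
      (fun n => ?_) (summable_survival c hsym hnn hconn y u)
    exact Finset.single_le_sum (f := fun w => (killed c y ^ n) u w)
      (fun w _ => kpow_nonneg c hnn y n u w) (Finset.mem_erase.mpr ⟨hz, Finset.mem_univ z⟩)

lemma hit_one (y u : V) (hu : u ≠ y) : ∑' n : ℕ, (killed c y ^ n) u y = 1 := by
  have hsum := summable_kpow c hsym hnn hconn y u y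
  have h1 : Filter.Tendsto (fun N => ∑ n ∈ Finset.range N, (killed c y ^ n) u y)
      Filter.atTop (nhds (∑' n : ℕ, (killed c y ^ n) u y)) := hsum.hasSum.tendsto_sum_nat
  have h2 : Filter.Tendsto (fun N => ∑ n ∈ Finset.range (N+1), (killed c y ^ n) u y)
      Filter.atTop (nhds (∑' n : ℕ, (killed c y ^ n) u y)) :=
    h1.comp (Filter.tendsto_add_atTop_nat 1)
  have h3 : Filter.Tendsto (fun N => 1 - survival c u y N) Filter.atTop (nhds 1) := by
    have := (summable_survival c hsym hnn hconn y u).tendsto_atTop_zero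
    have := Filter.Tendsto.sub (tendsto_const_nhds (x := (1:ℝ))) this
    simpa using this
  have h4 : (fun N => ∑ n ∈ Finset.range (N+1), (killed c y ^ n) u y)
      = fun N => 1 - survival c u y N := by
    funext N
    exact sum_range_kpow_y c hsym hnn hconn y u hu N
  rw [h4] at h2
  exact tendsto_nhds_unique h2 h3

lemma tsum_kpow_succ_left (y u z : V) :
    ∑' n : ℕ, (killed c y ^ (n+1)) u z
      = ∑ w, killed c y u w * ∑' n : ℕ, (killed c y ^ n) w z := by
  have h1 : ∀ n : ℕ, (killed c y ^ (n+1)) u z = ∑ w, killed c y u w * (killed c y ^ n) w z := by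
    intro n
    rw [pow_succ', Matrix.mul_apply]
  rw [tsum_congr h1, Summable.tsum_finsetSum (fun w _ => (summable_kpow c hsym hnn hconn y w z).mul_left _)]
  exact Finset.sum_congr rfl fun w _ => tsum_mul_left

lemma tsum_kpow_succ_right (y u z : V) :
    ∑' n : ℕ, (killed c y ^ (n+1)) u z
      = ∑ w, (∑' n : ℕ, (killed c y ^ n) u w) * killed c y w z := by
  have h1 : ∀ n : ℕ, (killed c y ^ (n+1)) u z = ∑ w, (killed c y ^ n) u w * killed c y w z := by
    intro n
    rw [pow_succ, Matrix.mul_apply]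
  rw [tsum_congr h1, Summable.tsum_finsetSum (fun w _ => (summable_kpow c hsym hnn hconn y u w).mul_right _)]
  exact Finset.sum_congr rfl fun w _ => tsum_mul_right

lemma visit_eq (y u z : V) (hz : z ≠ y) :
    visitExp c u y z = ∑' n : ℕ, (killed c y ^ n) u z := if_neg hz

lemma visit_kill_start (u z : V) (hz : z ≠ u) : visitExp c u u z = 0 := by
  rw [visit_eq c hsym hnn hconn u u z hz, tsum_congr (fun n => kpow_y_row c u n z hz), tsum_zero]

lemma rev_visit (y u v : V) (hu : u ≠ y) (hv : v ≠ y) :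
    nodeWeight c u * visitExp c u y v = nodeWeight c v * visitExp c v y u := by
  rw [visit_eq c hsym hnn hconn y u v hv, visit_eq c hsym hnn hconn y v u hu,
    ← tsum_mul_left, ← tsum_mul_left]
  exact tsum_congr fun n => rev c hsym hnn hconn y n u v hu hv

lemma green_harmonic (y x w : V) (hx : x ≠ y) (hw : w ≠ y) :
    visitExp c w y x = (if w = x then 1 else 0) + ∑ v, transProb c w v * visitExp c v y x := by
  rw [visit_eq c hsym hnn hconn y w x hx,
    Summable.tsum_eq_zero_add (summable_kpow c hsym hnn hconn y w x),
    tsum_kpow_succ_left c hsym hnn hconn y w x]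
  have e0 : (killed c y ^ 0) w x = (if w = x then (1:ℝ) else 0) := by
    rw [pow_zero, Matrix.one_apply]
  rw [e0]
  congr 1
  apply Finset.sum_congr rfl
  intro v _
  rw [visit_eq c hsym hnn hconn y v x hx]
  congr 1
  unfold killed
  simp [if_neg hw]

lemma tsum_mul_killed_col (y x : V) (hx : x ≠ y) :
    ∑ v, (∑' n : ℕ, (killed c y ^ n) x v) * killed c y v y = 1 := by
  rw [← tsum_kpow_succ_right c hsym hnn hconn y x y]
  have h := Summable.tsum_eq_zero_add (summable_kpow c hsym hnn hconn y x y)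
  rw [hit_one c hsym hnn hconn y x hx] at h
  rw [pow_zero, Matrix.one_apply_ne hx] at h
  linarith [h]

lemma P_at_kill (y x : V) (hx : x ≠ y) :
    ∑ v, transProb c y v * (visitExp c v y x / nodeWeight c x) = 1 / nodeWeight c y := by
  have hmx := mu_pos c hsym hnn hconn x
  have hmy := mu_pos c hsym hnn hconn y
  have key : ∀ v, transProb c y v * (visitExp c v y x / nodeWeight c x)
      = (1 / nodeWeight c y) * ((∑' n : ℕ, (killed c y ^ n) x v) * killed c y v y) := by
    intro v
    rcases eq_or_ne v y with rfl | hv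
    · rw [visit_kill_start c hsym hnn hconn v x hx, killed_y_row]
      ring
    · have hmv := mu_pos c hsym hnn hconn v
      have hrev := rev_visit c hsym hnn hconn y x v hx hv
      have hkill : killed c y v y = c v y / nodeWeight c v := by
        unfold killed transProb; simp [if_neg hv]
      have htp : transProb c y v = c y v / nodeWeight c y := rfl
      rw [htp, hkill, ← visit_eq c hsym hnn hconn y x v hv, hsym y v]
      field_simp
      linear_combination (-(c v y)) * hrev
  rw [Finset.sum_congr rfl fun v _ => key v, ← Finset.mul_sum,
    tsum_mul_killed_col c hsym hnn hconn y x hx, mul_one]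

lemma harmonic_const (s : V → ℝ) (hs : ∀ w, s w = ∑ v, transProb c w v * s v) (u v : V) :
    s u = s v := by
  obtain ⟨w0, _, hmax⟩ := Finset.exists_max_image Finset.univ s Finset.univ_nonempty
  have adj_closed : ∀ a b : V, (SimpleGraph.fromRel fun p q : V => 0 < c p q).Adj a b →
      s a = s w0 → s b = s w0 := by
    intro a b hab ha
    have hsum1 : ∑ v, transProb c a v = 1 := sum_transProb c hsym hnn hconn a
    have hzero : ∑ v, transProb c a v * (s w0 - s v) = 0 := by
      have : ∑ v, transProb c a v * (s w0 - s v)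
          = (∑ v, transProb c a v) * s w0 - ∑ v, transProb c a v * s v := by
        rw [Finset.sum_mul, ← Finset.sum_sub_distrib]
        apply Finset.sum_congr rfl
        intro v _
        ring
      rw [this, hsum1, one_mul, ← hs a, ha]
      ring
    have hnonneg : ∀ v ∈ Finset.univ, 0 ≤ transProb c a v * (s w0 - s v) := by
      intro v _
      apply mul_nonneg (div_nonneg (hnn a v) (le_of_lt (mu_pos c hsym hnn hconn a)))
      have := hmax v (Finset.mem_univ v)
      linarith
    have hall := (Finset.sum_eq_zero_iff_of_nonneg hnonneg).mp hzero
    have hb := hall b (Finset.mem_univ b)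
    rw [SimpleGraph.fromRel_adj] at hab
    have hc : 0 < c a b := by
      rcases hab.2 with h' | h'
      · exact h'
      · rw [hsym]; exact h'
    have hp : 0 < transProb c a b := div_pos hc (mu_pos c hsym hnn hconn a)
    have : s w0 - s b = 0 := by
      by_contra hne
      exact hne (by
        have := mul_eq_zero.mp hb
        rcases this with h' | h'
        · exact absurd h' (ne_of_gt hp)
        · exact h')
    have hble := hmax b (Finset.mem_univ b)
    linarith
  have all_eq : ∀ u : V, s u = s w0 := by
    intro u
    obtain ⟨p⟩ := hconn.preconnected w0 u
    have : ∀ (a b : V) (q : (SimpleGraph.fromRel fun p q : V => 0 < c p q).Walk a b),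
        s a = s w0 → s b = s w0 := by
      intro a b q
      induction q with
      | nil => exact id
      | cons h q ih => intro ha; exact ih (adj_closed _ _ h ha)
    exact this w0 u p rfl
  rw [all_eq u, all_eq v]

lemma hitExp_eq_sum_visit (y u : V) : hitExp c u y = ∑ z, visitExp c u y z := by
  unfold hitExp survival
  rw [Summable.tsum_finsetSum (fun z _ => summable_kpow c hsym hnn hconn y u z)]
  rw [← Finset.add_sum_erase _ (fun z => visitExp c u y z) (Finset.mem_univ y)]
  rw [visitExp, if_pos rfl, zero_add]
  apply Finset.sum_congr rfl
  intro z hz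
  rw [visit_eq c hsym hnn hconn y u z (Finset.ne_of_mem_erase hz)]


end CommuteAux

open CommuteAux

/-- **Commute time formula.** For the random walk on a finite connected
weighted graph and distinct vertices `x ≠ y`, the expected commute time satisfies
`E^x(τ_y) + E^y(τ_x) = R_{xy} · ∑_{w ∈ V} μ_w`, where `R_{xy} = (U_x^{xy} + U_x^{yx})/μ_x`
is the effective resistance between `x` and `y`. -/
theorem commute_time_formula
    (c : V → V → ℝ) (hsym : ∀ u v, c u v = c v u) (hnn : ∀ u v, 0 ≤ c u v)
    (hconn : (SimpleGraph.fromRel fun u v : V => 0 < c u v).Connected)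
    (x y : V) (hxy : x ≠ y) :
    hitExp c x y + hitExp c y x = effRes c x y * ∑ w, nodeWeight c w := by
  have : Nontrivial V := ⟨⟨x, y, hxy⟩⟩
  have hmx : 0 < nodeWeight c x := mu_pos c hsym hnn hconn x
  have hmy : 0 < nodeWeight c y := mu_pos c hsym hnn hconn y
  set a : V → ℝ := fun w => visitExp c w y x / nodeWeight c x with ha_def
  set b : V → ℝ := fun w => visitExp c w x y / nodeWeight c y with hb_def
  have hay : a y = 0 := by
    simp only [ha_def, visit_kill_start c hsym hnn hconn y x hxy, zero_div]
  have hbx : b x = 0 := by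
    simp only [hb_def, visit_kill_start c hsym hnn hconn x y (Ne.symm hxy), zero_div]
  have haA : ∀ w, w ≠ y →
      a w = (if w = x then 1 else 0) / nodeWeight c x + ∑ v, transProb c w v * a v := by
    intro w hw
    have h := green_harmonic c hsym hnn hconn y x w hxy hw
    simp only [ha_def]
    rw [h, add_div, Finset.sum_div]
    congr 1
    apply Finset.sum_congr rfl
    intro v _
    ring
  have hbB : ∀ w, w ≠ x →
      b w = (if w = y then 1 else 0) / nodeWeight c y + ∑ v, transProb c w v * b v := by
    intro w hw
    have h := green_harmonic c hsym hnn hconn x y w (Ne.symm hxy) hw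
    simp only [hb_def]
    rw [h, add_div, Finset.sum_div]
    congr 1
    apply Finset.sum_congr rfl
    intro v _
    ring
  have haYA : ∑ v, transProb c y v * a v = 1 / nodeWeight c y :=
    P_at_kill c hsym hnn hconn y x hxy
  have hbXB : ∑ v, transProb c x v * b v = 1 / nodeWeight c x :=
    P_at_kill c hsym hnn hconn x y (Ne.symm hxy)
  set s : V → ℝ := fun w => a w + b w with hs_def
  have hsplit : ∀ w, ∑ v, transProb c w v * s v
      = ∑ v, transProb c w v * a v + ∑ v, transProb c w v * b v := by
    intro w
    rw [← Finset.sum_add_distrib]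
    apply Finset.sum_congr rfl
    intro v _
    simp only [hs_def]
    ring
  have hharm : ∀ w, s w = ∑ v, transProb c w v * s v := by
    intro w
    rcases eq_or_ne w y with rfl | hwy
    · rw [hsplit, haYA]
      have hb := hbB w (Ne.symm hxy)
      rw [if_pos rfl] at hb
      simp only [hs_def, hay, zero_add]
      linarith
    · rcases eq_or_ne w x with rfl | hwx
      · rw [hsplit, hbXB]
        have ha := haA w hwy
        rw [if_pos rfl] at ha
        simp only [hs_def, hbx, add_zero]
        linarith
      · rw [hsplit]
        have ha := haA w hwy
        have hb := hbB w hwx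
        rw [if_neg hwx] at ha
        rw [if_neg hwy] at hb
        simp only [hs_def]
        rw [zero_div, zero_add] at ha hb
        linarith
  have hconst : ∀ w, s w = s x := fun w => harmonic_const c hsym hnn hconn s hharm w x
  have hvyxx : visitExp c y x x = 0 := by rw [visitExp, if_pos rfl]
  have hsx : s x = effRes c x y := by
    simp only [hs_def, hbx, add_zero, ha_def, effRes, hvyxx]
  have hvisA : ∀ z, visitExp c x y z = nodeWeight c z * a z := by
    intro z
    rcases eq_or_ne z y with rfl | hz
    · rw [visitExp, if_pos rfl, hay, mul_zero]
    · have h := rev_visit c hsym hnn hconn y x z hxy hz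
      simp only [ha_def]
      field_simp
      linarith
  have hvisB : ∀ z, visitExp c y x z = nodeWeight c z * b z := by
    intro z
    rcases eq_or_ne z x with rfl | hz
    · rw [visitExp, if_pos rfl, hbx, mul_zero]
    · have h := rev_visit c hsym hnn hconn x y z (Ne.symm hxy) hz
      simp only [hb_def]
      field_simp
      linarith
  rw [hitExp_eq_sum_visit c hsym hnn hconn y x, hitExp_eq_sum_visit c hsym hnn hconn x y,
    ← Finset.sum_add_distrib]
  have : ∀ z : V, visitExp c x y z + visitExp c y x z = nodeWeight c z * effRes c x y := by
    intro z
    rw [hvisA z, hvisB z, ← mul_add]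
    have : a z + b z = effRes c x y := by rw [← hsx]; exact hconst z
    rw [this]
  rw [Finset.sum_congr rfl fun z _ => this z, ← Finset.sum_mul]
  ring
end

section
/- Foster-type identity for weighted graphs: for a finite connected weighted graph G = (V,E,C) with n vertices, the effective resistances satisfy ∑_{{x,y} ∈ E} R_{xy} · c_{xy} = n − 1, where the sum is over unordered edges and R_{xy} = (U_x^{xy} + U_x^{yx})/μ_x is the effective resistance between x and y. -/
open Finset

variable {V : Type*} [Fintype V] [DecidableEq V]

namespace Foster7
open Matrix
open scoped NNReal

noncomputable def lap (c : V → V → ℝ) : Matrix V V ℝ :=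
  Matrix.diagonal (nodeWeight c) - Matrix.of c

lemma lap_apply (c : V → V → ℝ) (u v : V) :
    lap c u v = (if u = v then nodeWeight c u else 0) - c u v := by
  simp [lap, Matrix.sub_apply, Matrix.diagonal_apply]

lemma lap_mulVec (c : V → V → ℝ) (x : V → ℝ) (u : V) :
    (lap c *ᵥ x) u = nodeWeight c u * x u - ∑ v, c u v * x v := by
  simp only [Matrix.mulVec, dotProduct, lap_apply, sub_mul, Finset.sum_sub_distrib]
  congr 1
  rw [Finset.sum_congr rfl (fun v _ => by rw [ite_mul, zero_mul])]
  simp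

lemma lap_mulVec_const (c : V → V → ℝ) (k : ℝ) :
    lap c *ᵥ (fun _ => k) = 0 := by
  funext u
  rw [lap_mulVec]
  simp only [nodeWeight, Pi.zero_apply, Finset.sum_mul]
  exact sub_self _

lemma quad (c : V → V → ℝ) (hsym : ∀ u v, c u v = c v u) (x : V → ℝ) :
    2 * (x ⬝ᵥ lap c *ᵥ x) = ∑ u, ∑ v, c u v * (x u - x v) ^ 2 := by
  have hA : ∀ u, ∑ v, c u v * x u ^ 2 = nodeWeight c u * x u ^ 2 := by
    intro u; rw [nodeWeight, Finset.sum_mul]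
  have hB : ∑ u, ∑ v, c u v * x v ^ 2 = ∑ u, nodeWeight c u * x u ^ 2 := by
    rw [Finset.sum_comm]
    refine Finset.sum_congr rfl fun v _ => ?_
    rw [nodeWeight, Finset.sum_mul]
    exact Finset.sum_congr rfl fun u _ => by rw [hsym]
  have hexp : ∑ u, ∑ v, c u v * (x u - x v) ^ 2
      = ∑ u, ((∑ v, c u v * x u ^ 2) + (∑ v, c u v * x v ^ 2)
          - 2 * ∑ v, c u v * (x u * x v)) := by
    refine Finset.sum_congr rfl fun u _ => ?_
    rw [Finset.mul_sum, ← Finset.sum_add_distrib, ← Finset.sum_sub_distrib]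
    exact Finset.sum_congr rfl fun v _ => by ring
  have hdot : x ⬝ᵥ lap c *ᵥ x
      = ∑ u, (nodeWeight c u * x u ^ 2 - ∑ v, c u v * (x u * x v)) := by
    unfold dotProduct
    refine Finset.sum_congr rfl fun u _ => ?_
    rw [lap_mulVec, mul_sub, Finset.mul_sum]
    congr 1
    · ring
    · exact Finset.sum_congr rfl fun v _ => by ring
  rw [hexp, Finset.sum_sub_distrib, Finset.sum_add_distrib, hB, hdot, Finset.mul_sum,
    ← Finset.sum_add_distrib, ← Finset.sum_sub_distrib]
  exact Finset.sum_congr rfl fun u _ => by rw [hA]; ring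

lemma quad_nonneg (c : V → V → ℝ) (hsym : ∀ u v, c u v = c v u)
    (hnn : ∀ u v, 0 ≤ c u v) (x : V → ℝ) : 0 ≤ x ⬝ᵥ lap c *ᵥ x := by
  have h := quad c hsym x
  have h2 : (0:ℝ) ≤ ∑ u, ∑ v, c u v * (x u - x v) ^ 2 :=
    Finset.sum_nonneg fun u _ => Finset.sum_nonneg fun v _ =>
      mul_nonneg (hnn u v) (sq_nonneg _)
  linarith

lemma quad_eq_zero (c : V → V → ℝ) (hsym : ∀ u v, c u v = c v u)
    (hnn : ∀ u v, 0 ≤ c u v) {x : V → ℝ} (h : x ⬝ᵥ lap c *ᵥ x = 0)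
    {u v : V} (hc : 0 < c u v) : x u = x v := by
  have h1 : ∑ u, ∑ v, c u v * (x u - x v) ^ 2 = 0 := by
    rw [← quad c hsym x, h]; ring
  have hnn2 : ∀ a ∈ (univ : Finset V), (0:ℝ) ≤ ∑ v, c a v * (x a - x v) ^ 2 :=
    fun a _ => Finset.sum_nonneg fun v _ => mul_nonneg (hnn a v) (sq_nonneg _)
  have h2 := (Finset.sum_eq_zero_iff_of_nonneg hnn2).1 h1 u (mem_univ u)
  have h3 := (Finset.sum_eq_zero_iff_of_nonneg
    (fun b _ => mul_nonneg (hnn u b) (sq_nonneg (x u - x b)))).1 h2 v (mem_univ v)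
  have h4 : (x u - x v) ^ 2 = 0 := by
    rcases mul_eq_zero.1 h3 with h | h
    · exact absurd h hc.ne'
    · exact h
  have := pow_eq_zero_iff (n := 2) (by norm_num) |>.1 h4
  linarith

lemma walk_const {G : SimpleGraph V} {x : V → ℝ}
    (hadj : ∀ {a b : V}, G.Adj a b → x a = x b) {u v : V} (w : G.Walk u v) :
    x u = x v := by
  induction w with
  | nil => rfl
  | cons h p ih => exact (hadj h).trans ih

/-- The regularized matrix `N = L + J`. -/
noncomputable def Nm (c : V → V → ℝ) : Matrix V V ℝ :=
  lap c + Matrix.of fun _ _ => (1:ℝ)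

lemma Nm_mulVec (c : V → V → ℝ) (x : V → ℝ) (u : V) :
    (Nm c *ᵥ x) u = (lap c *ᵥ x) u + ∑ v, x v := by
  rw [Nm, Matrix.add_mulVec, Pi.add_apply]
  congr 1
  simp [Matrix.mulVec, dotProduct]

lemma Nm_symm (c : V → V → ℝ) (hsym : ∀ u v, c u v = c v u) (u v : V) :
    Nm c u v = Nm c v u := by
  simp only [Nm, Matrix.add_apply, Matrix.of_apply, lap_apply, hsym u v]
  by_cases h : u = v
  · subst h; simp
  · rw [if_neg h, if_neg (Ne.symm h)]

lemma Nm_posdef (c : V → V → ℝ) (hsym : ∀ u v, c u v = c v u)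
    (hnn : ∀ u v, 0 ≤ c u v)
    (hconn : (SimpleGraph.fromRel fun u v : V => 0 < c u v).Connected) :
    (Nm c).PosDef := by
  refine Matrix.posDef_iff_dotProduct_mulVec.mpr ⟨?_, ?_⟩
  · ext u v
    simp only [Matrix.conjTranspose_apply, star_trivial]
    exact Nm_symm c hsym v u
  · intro x hx
    simp only [star_trivial]
    have hdot : x ⬝ᵥ Nm c *ᵥ x = x ⬝ᵥ lap c *ᵥ x + (∑ v, x v) ^ 2 := by
      unfold dotProduct
      have : ∀ u ∈ (univ : Finset V), x u * (Nm c *ᵥ x) u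
          = x u * (lap c *ᵥ x) u + x u * ∑ v, x v := by
        intro u _; rw [Nm_mulVec]; ring
      rw [Finset.sum_congr rfl this, Finset.sum_add_distrib, ← Finset.sum_mul, sq]
    have hq := quad_nonneg c hsym hnn x
    rcases lt_or_eq_of_le hq with hq' | hq'
    · rw [hdot]; nlinarith [sq_nonneg (∑ v, x v)]
    · -- quadratic form vanishes; show ∑ x ≠ 0
      rw [hdot, ← hq']
      have hconst : ∀ u v : V, x u = x v := by
        intro u v
        obtain ⟨w⟩ := hconn.preconnected u v
        refine walk_const (fun {a b} h => ?_) w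
        rw [SimpleGraph.fromRel_adj] at h
        rcases h.2 with hc | hc
        · exact quad_eq_zero c hsym hnn hq'.symm hc
        · exact (quad_eq_zero c hsym hnn hq'.symm hc).symm
      have hne : ∑ v, x v ≠ 0 := by
        intro h0
        apply hx
        funext u
        have hcard : (0:ℝ) < (Fintype.card V : ℝ) := by
          have : 0 < Fintype.card V := Fintype.card_pos_iff.2 hconn.nonempty
          exact_mod_cast this
        have : ∑ v, x v = (Fintype.card V : ℝ) * x u := by
          rw [Finset.sum_congr rfl (fun v _ => hconst v u)]
          simp [Finset.sum_const, nsmul_eq_mul]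
        rw [this] at h0
        have := mul_eq_zero.1 h0
        rcases this with h | h
        · exact absurd h hcard.ne'
        · exact h
      positivity

lemma Nm_mul_inv (c : V → V → ℝ) (h : (Nm c).PosDef) : Nm c * (Nm c)⁻¹ = 1 :=
  Matrix.mul_nonsing_inv _ ((Matrix.isUnit_iff_isUnit_det _).1 h.isUnit)

lemma inv_mul_Nm (c : V → V → ℝ) (h : (Nm c).PosDef) : (Nm c)⁻¹ * Nm c = 1 :=
  Matrix.nonsing_inv_mul _ ((Matrix.isUnit_iff_isUnit_det _).1 h.isUnit)

lemma Binv_symm (c : V → V → ℝ) (hsym : ∀ u v, c u v = c v u) (u v : V) :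
    (Nm c)⁻¹ u v = (Nm c)⁻¹ v u := by
  have ht : (Nm c)ᵀ = Nm c := by
    ext a b; rw [Matrix.transpose_apply]; exact Nm_symm c hsym b a
  have h2 : ((Nm c)⁻¹)ᵀ = (Nm c)⁻¹ := by
    rw [Matrix.transpose_nonsing_inv, ht]
  rw [← h2, Matrix.transpose_apply, h2]

lemma Nm_mulVec_one (c : V → V → ℝ) :
    Nm c *ᵥ (fun _ => (1:ℝ)) = fun _ => (Fintype.card V : ℝ) := by
  funext u
  rw [Nm_mulVec, lap_mulVec_const]
  simp [Finset.card_univ]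

lemma Binv_mulVec_one (c : V → V → ℝ) (h : (Nm c).PosDef)
    (h0 : (Fintype.card V : ℝ) ≠ 0) :
    (Nm c)⁻¹ *ᵥ (fun _ => (1:ℝ)) = fun _ => (Fintype.card V : ℝ)⁻¹ := by
  have h1 : (Nm c)⁻¹ *ᵥ (Nm c *ᵥ (fun _ => (1:ℝ))) = fun _ => (1:ℝ) := by
    rw [Matrix.mulVec_mulVec, inv_mul_Nm c h, Matrix.one_mulVec]
  rw [Nm_mulVec_one] at h1
  have h2 : (fun _ => (Fintype.card V : ℝ)) = (Fintype.card V : ℝ) • (fun _ => (1:ℝ) : V → ℝ) := by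
    funext u; simp
  rw [h2, Matrix.mulVec_smul] at h1
  funext u
  have := congrFun h1 u
  simp only [Pi.smul_apply, smul_eq_mul] at this
  exact eq_inv_of_mul_eq_one_right this

section Killed

lemma killed_apply (c : V → V → ℝ) (y u v : V) :
    killed c y u v = if u = y then 0 else c u v / nodeWeight c u := rfl

lemma nodeWeight_nonneg (c : V → V → ℝ) (hnn : ∀ u v, 0 ≤ c u v) (u : V) :
    0 ≤ nodeWeight c u :=
  Finset.sum_nonneg fun v _ => hnn u v

lemma killed_nonneg (c : V → V → ℝ) (hnn : ∀ u v, 0 ≤ c u v) (y u v : V) :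
    0 ≤ killed c y u v := by
  rw [killed_apply]
  split
  · exact le_refl _
  · exact div_nonneg (hnn u v) (nodeWeight_nonneg c hnn u)

lemma killed_pow_nonneg (c : V → V → ℝ) (hnn : ∀ u v, 0 ≤ c u v) (y : V) (n : ℕ)
    (u v : V) : 0 ≤ (killed c y ^ n) u v := by
  induction n generalizing u v with
  | zero =>
    rw [pow_zero, Matrix.one_apply]
    split <;> norm_num
  | succ n ih =>
    rw [pow_succ, Matrix.mul_apply]
    exact Finset.sum_nonneg fun w _ => mul_nonneg (ih u w) (killed_nonneg c hnn y w v)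

lemma killed_rowsum_le_one (c : V → V → ℝ) (hnn : ∀ u v, 0 ≤ c u v) (y u : V) :
    ∑ v, killed c y u v ≤ 1 := by
  by_cases h : u = y
  · simp [killed_apply, h]
  · simp only [killed_apply, if_neg h]
    rw [← Finset.sum_div]
    rcases eq_or_lt_of_le (nodeWeight_nonneg c hnn u) with h0 | h0
    · rw [← h0, ← nodeWeight]
      norm_num
    · rw [← nodeWeight, div_self h0.ne']

lemma killed_rowsum_succ (c : V → V → ℝ) (y : V) (n : ℕ) (u : V) :
    ∑ v, (killed c y ^ (n+1)) u v
      = ∑ w, killed c y u w * ∑ v, (killed c y ^ n) w v := by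
  rw [pow_succ']
  simp only [Matrix.mul_apply]
  rw [Finset.sum_comm]
  exact Finset.sum_congr rfl fun w _ => by rw [Finset.mul_sum]

lemma killed_pow_rowsum_le_one (c : V → V → ℝ) (hnn : ∀ u v, 0 ≤ c u v) (y : V)
    (n : ℕ) (u : V) : ∑ v, (killed c y ^ n) u v ≤ 1 := by
  induction n generalizing u with
  | zero =>
    rw [pow_zero]
    simp [Matrix.one_apply]
  | succ n ih =>
    rw [killed_rowsum_succ]
    calc ∑ w, killed c y u w * ∑ v, (killed c y ^ n) w v
        ≤ ∑ w, killed c y u w * 1 :=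
          Finset.sum_le_sum fun w _ =>
            mul_le_mul_of_nonneg_left (ih w) (killed_nonneg c hnn y u w)
      _ = ∑ w, killed c y u w := by simp
      _ ≤ 1 := killed_rowsum_le_one c hnn y u

lemma killed_pow_rowsum_antitone (c : V → V → ℝ) (hnn : ∀ u v, 0 ≤ c u v) (y u : V) :
    Antitone (fun n => ∑ v, (killed c y ^ n) u v) := by
  have key : ∀ n, ∀ u, ∑ v, (killed c y ^ (n+1)) u v ≤ ∑ v, (killed c y ^ n) u v := by
    intro n
    induction n with
    | zero =>
      intro u
      rw [pow_zero, pow_one]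
      simp only [Matrix.one_apply]
      calc ∑ v, killed c y u v ≤ 1 := killed_rowsum_le_one c hnn y u
        _ = ∑ v, if u = v then (1:ℝ) else 0 := by simp
    | succ n ih =>
      intro u
      rw [killed_rowsum_succ, killed_rowsum_succ]
      exact Finset.sum_le_sum fun w _ =>
        mul_le_mul_of_nonneg_left (ih w) (killed_nonneg c hnn y u w)
  exact antitone_nat_of_succ_le fun n => key n u

lemma mu_pos (c : V → V → ℝ) (hsym : ∀ u v, c u v = c v u) (hnn : ∀ u v, 0 ≤ c u v)
    (hconn : (SimpleGraph.fromRel fun u v : V => 0 < c u v).Connected)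
    (hcard : 2 ≤ Fintype.card V) (u : V) : 0 < nodeWeight c u := by
  obtain ⟨v, hv⟩ := Fintype.exists_ne_of_one_lt_card (by omega) u
  obtain ⟨w⟩ := hconn.preconnected u v
  cases w with
  | nil => exact absurd rfl hv.symm
  | cons h p =>
    rename_i b
    rw [SimpleGraph.fromRel_adj] at h
    have hc : 0 < c u b := by
      rcases h.2 with hc | hc
      · exact hc
      · rwa [hsym]
    calc (0:ℝ) < c u b := hc
      _ ≤ nodeWeight c u := Finset.single_le_sum (fun i _ => hnn u i) (mem_univ b)

lemma exists_rowsum_lt (c : V → V → ℝ) (hsym : ∀ u v, c u v = c v u)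
    (hnn : ∀ u v, 0 ≤ c u v)
    (hconn : (SimpleGraph.fromRel fun u v : V => 0 < c u v).Connected)
    (hμ : ∀ u, 0 < nodeWeight c u) (y x : V) :
    ∃ n, ∑ v, (killed c y ^ n) x v < 1 := by
  obtain ⟨w⟩ := hconn.preconnected x y
  induction w with
  | nil =>
    rename_i d
    refine ⟨1, ?_⟩
    rw [pow_one]
    have : ∀ v, killed c d d v = 0 := fun v => by rw [killed_apply, if_pos rfl]
    simp [this]
  | cons h p ih =>
    rename_i a b d
    obtain ⟨n, hn⟩ := ih
    by_cases hay : a = d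
    · refine ⟨1, ?_⟩
      subst hay
      rw [pow_one]
      have : ∀ v, killed c a a v = 0 := fun v => by rw [killed_apply, if_pos rfl]
      simp [this]
    · refine ⟨n + 1, ?_⟩
      rw [killed_rowsum_succ]
      have hcab : 0 < c a b := by
        rw [SimpleGraph.fromRel_adj] at h
        rcases h.2 with hc | hc
        · exact hc
        · rwa [hsym]
      have hQab : 0 < killed c d a b := by
        rw [killed_apply, if_neg hay]
        exact div_pos hcab (hμ a)
      calc ∑ w, killed c d a w * ∑ v, (killed c d ^ n) w v
          < ∑ w, killed c d a w := by
            refine Finset.sum_lt_sum (fun i _ => ?_) ⟨b, mem_univ b, ?_⟩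
            · calc killed c d a i * ∑ v, (killed c d ^ n) i v
                  ≤ killed c d a i * 1 :=
                    mul_le_mul_of_nonneg_left (killed_pow_rowsum_le_one c hnn d n i)
                      (killed_nonneg c hnn d a i)
                _ = killed c d a i := mul_one _
            · calc killed c d a b * ∑ v, (killed c d ^ n) b v
                  < killed c d a b * 1 := by
                    exact mul_lt_mul_of_pos_left hn hQab
                _ = killed c d a b := mul_one _
        _ ≤ 1 := killed_rowsum_le_one c hnn d a

lemma exists_uniform_rowsum_lt (c : V → V → ℝ) (hsym : ∀ u v, c u v = c v u)
    (hnn : ∀ u v, 0 ≤ c u v)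
    (hconn : (SimpleGraph.fromRel fun u v : V => 0 < c u v).Connected)
    (hμ : ∀ u, 0 < nodeWeight c u) (y : V) :
    ∃ m, 0 < m ∧ ∀ x, ∑ v, (killed c y ^ m) x v < 1 := by
  choose f hf using exists_rowsum_lt c hsym hnn hconn hμ y
  refine ⟨univ.sup f + 1, Nat.succ_pos _, fun x => ?_⟩
  have h1 : f x ≤ univ.sup f + 1 := le_trans (Finset.le_sup (mem_univ x)) (Nat.le_succ _)
  exact lt_of_le_of_lt (killed_pow_rowsum_antitone c hnn y x h1) (hf x)

end Killed

section NormPart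

attribute [local instance] Matrix.linftyOpNormedRing Matrix.linftyOpNormedAlgebra

lemma rowsum_norm_le {A : Matrix V V ℝ} (h0 : ∀ u v, 0 ≤ A u v)
    (h : ∀ u, ∑ v, A u v ≤ 1) : ‖A‖ ≤ 1 := by
  rw [Matrix.linfty_opNorm_def]
  have : ((univ.sup fun i => ∑ j, ‖A i j‖₊) : ℝ≥0) ≤ 1 := by
    refine Finset.sup_le fun i _ => ?_
    rw [← NNReal.coe_le_coe]
    push_cast
    calc ∑ j, (‖A i j‖₊ : ℝ) = ∑ j, A i j :=
          Finset.sum_congr rfl fun j _ => by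
            rw [coe_nnnorm, Real.norm_of_nonneg (h0 i j)]
      _ ≤ 1 := h i
  exact_mod_cast this

lemma rowsum_norm_lt {A : Matrix V V ℝ} (h0 : ∀ u v, 0 ≤ A u v)
    (h : ∀ u, ∑ v, A u v < 1) : ‖A‖ < 1 := by
  rw [Matrix.linfty_opNorm_def]
  have : ((univ.sup fun i => ∑ j, ‖A i j‖₊) : ℝ≥0) < 1 := by
    refine (Finset.sup_lt_iff (by simp)).2 fun i _ => ?_
    rw [← NNReal.coe_lt_coe]
    push_cast
    calc ∑ j, (‖A i j‖₊ : ℝ) = ∑ j, A i j :=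
          Finset.sum_congr rfl fun j _ => by
            rw [coe_nnnorm, Real.norm_of_nonneg (h0 i j)]
      _ < 1 := h i
  exact_mod_cast this

lemma summable_killed_pow (c : V → V → ℝ) (hnn : ∀ u v, 0 ≤ c u v) (y : V)
    {m : ℕ} (hm0 : 0 < m) (hml : ∀ x, ∑ v, (killed c y ^ m) x v < 1) :
    Summable (fun k : ℕ => killed c y ^ k) := by
  haveI : CompleteSpace (Matrix V V ℝ) := FiniteDimensional.complete ℝ _
  haveI : NeZero m := ⟨hm0.ne'⟩
  set Q := killed c y with hQdef
  have hQle : ‖Q‖ ≤ 1 :=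
    rowsum_norm_le (killed_nonneg c hnn y) (killed_rowsum_le_one c hnn y)
  set ρ := ‖Q ^ m‖ with hρdef
  have hρlt : ρ < 1 :=
    rowsum_norm_lt (killed_pow_nonneg c hnn y m) hml
  have hρ0 : (0:ℝ) ≤ ρ := norm_nonneg _
  set B0 : ℝ := max ‖(1 : Matrix V V ℝ)‖ 1 with hB0
  have hB01 : (1:ℝ) ≤ B0 := le_max_right _ _
  have hpow : ∀ j, ‖Q ^ j‖ ≤ B0 := by
    intro j
    cases j with
    | zero => rw [pow_zero]; exact le_max_left _ _
    | succ j =>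
      calc ‖Q ^ (j+1)‖ ≤ ‖Q‖ ^ (j+1) := norm_pow_le' Q (Nat.succ_pos j)
        _ ≤ 1 := pow_le_one₀ (norm_nonneg Q) hQle
        _ ≤ B0 := hB01
  have hpow2 : ∀ q, ‖(Q ^ m) ^ q‖ ≤ B0 * ρ ^ q := by
    intro q
    cases q with
    | zero =>
      rw [pow_zero, pow_zero, mul_one]
      exact le_max_left _ _
    | succ q =>
      calc ‖(Q^m) ^ (q+1)‖ ≤ ρ ^ (q+1) := norm_pow_le' _ (Nat.succ_pos q)
        _ ≤ B0 * ρ ^ (q+1) := le_mul_of_one_le_left (pow_nonneg hρ0 _) hB01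
  have hbound : ∀ k, ‖Q ^ k‖ ≤ (B0 * B0) * ρ ^ (k / m) := by
    intro k
    have hk : Q ^ k = (Q ^ m) ^ (k / m) * Q ^ (k % m) := by
      rw [← pow_mul, ← pow_add, Nat.div_add_mod]
    rw [hk]
    calc ‖(Q^m)^(k/m) * Q^(k % m)‖ ≤ ‖(Q^m)^(k/m)‖ * ‖Q^(k%m)‖ := norm_mul_le _ _
      _ ≤ (B0 * ρ^(k/m)) * B0 :=
          mul_le_mul (hpow2 _) (hpow _) (norm_nonneg _)
            (by positivity)
      _ = (B0*B0) * ρ^(k/m) := by ring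
  have hsummand : Summable (fun k : ℕ => (B0*B0) * ρ ^ (k / m)) := by
    have hgeo : Summable (fun q : ℕ => ρ ^ q) := summable_geometric_of_lt_one hρ0 hρlt
    have hone : Summable (fun _ : Fin m => (1:ℝ)) := Summable.of_finite
    have h1 : Summable (fun p : ℕ × Fin m => ρ ^ p.1) := by
      have := Summable.mul_of_nonneg hgeo hone
        (fun q => pow_nonneg hρ0 q) (fun _ => zero_le_one)
      simpa using this
    have h2 : Summable ((fun p : ℕ × Fin m => ρ ^ p.1) ∘ (Nat.divModEquiv m)) :=
      ((Nat.divModEquiv m).summable_iff).2 h1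
    exact Summable.mul_left _ h2
  exact Summable.of_norm_bounded hsummand hbound

lemma mulVec_apply' (A : Matrix V V ℝ) (f : V → ℝ) (u : V) :
    (A *ᵥ f) u = ∑ z, A u z * f z := rfl

lemma killed_geom (c : V → V → ℝ) (hnn : ∀ u v, 0 ≤ c u v) (y : V)
    {m : ℕ} (hm0 : 0 < m) (hml : ∀ x, ∑ v, (killed c y ^ m) x v < 1) :
    (∑' k : ℕ, killed c y ^ k) * (1 - killed c y) = 1 := by
  haveI : CompleteSpace (Matrix V V ℝ) := FiniteDimensional.complete ℝ _
  have hs := summable_killed_pow c hnn y hm0 hml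
  set Q := killed c y with hQdef
  set G := ∑' k : ℕ, Q ^ k with hGdef
  have h0 := hs.tsum_eq_zero_add
  rw [pow_zero] at h0
  have h1 : ∑' k : ℕ, Q ^ (k+1) = G - 1 := eq_sub_of_add_eq' h0.symm
  have h2 : G * Q = G - 1 := by
    calc G * Q = ∑' k : ℕ, (Q ^ k * Q) := (hs.tsum_mul_right Q).symm
      _ = ∑' k : ℕ, Q ^ (k+1) := by
          refine tsum_congr fun k => ?_
          rw [pow_succ]
      _ = G - 1 := h1
  rw [mul_sub, mul_one, h2, sub_sub_cancel]

lemma entry_le_norm (A : Matrix V V ℝ) (x z : V) : ‖A x z‖ ≤ ‖A‖ := by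
  rw [Matrix.linfty_opNorm_def]
  have h1 : ‖A x z‖₊ ≤ ∑ j, ‖A x j‖₊ :=
    Finset.single_le_sum (f := fun j => ‖A x j‖₊) (fun j _ => zero_le) (mem_univ z)
  have h2 : (∑ j, ‖A x j‖₊) ≤ univ.sup (fun i => ∑ j, ‖A i j‖₊) :=
    Finset.le_sup (f := fun i => ∑ j, ‖A i j‖₊) (mem_univ x)
  exact_mod_cast h1.trans h2

lemma tsum_entry (c : V → V → ℝ) (hnn : ∀ u v, 0 ≤ c u v) (y : V)
    {m : ℕ} (hm0 : 0 < m) (hml : ∀ x, ∑ v, (killed c y ^ m) x v < 1) (x z : V) :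
    (∑' k : ℕ, (killed c y ^ k) x z) = (∑' k : ℕ, killed c y ^ k) x z := by
  haveI : CompleteSpace (Matrix V V ℝ) := FiniteDimensional.complete ℝ _
  have hs := summable_killed_pow c hnn y hm0 hml
  let ev : Matrix V V ℝ →ₗ[ℝ] ℝ :=
    { toFun := fun M => M x z, map_add' := fun _ _ => rfl, map_smul' := fun _ _ => rfl }
  let evC : Matrix V V ℝ →L[ℝ] ℝ :=
    ev.mkContinuous 1 (fun M => by rw [one_mul]; exact entry_le_norm M x z)
  have := evC.map_tsum hs
  exact this.symm

lemma effRes_eq (c : V → V → ℝ) (hsym : ∀ u v, c u v = c v u)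
    (hnn : ∀ u v, 0 ≤ c u v)
    (hconn : (SimpleGraph.fromRel fun u v : V => 0 < c u v).Connected)
    (hcard : 2 ≤ Fintype.card V) {x y : V} (hxy : x ≠ y) :
    effRes c x y = (Nm c)⁻¹ x x + (Nm c)⁻¹ y y - (Nm c)⁻¹ x y - (Nm c)⁻¹ y x := by
  classical
  have hμ := mu_pos c hsym hnn hconn hcard
  obtain ⟨m, hm0, hml⟩ := exists_uniform_rowsum_lt c hsym hnn hconn hμ y
  have hGA := killed_geom c hnn y hm0 hml
  have hentry := tsum_entry c hnn y hm0 hml x x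
  set B := (Nm c)⁻¹ with hB
  have hpd := Nm_posdef c hsym hnn hconn
  have hcard0 : (Fintype.card V : ℝ) ≠ 0 := Nat.cast_ne_zero.2 (by omega)
  set u : V → ℝ := fun z => (if z = x then 1 else 0) - (if z = y then 1 else 0) with hu
  set v : V → ℝ := B *ᵥ u with hv
  have hBones := Binv_mulVec_one c hpd hcard0
  have hsumu : ∑ t, u t = 0 := by
    rw [hu]
    rw [Finset.sum_sub_distrib]
    simp [Finset.sum_ite_eq']
  have hsumv : ∑ z, v z = 0 := by
    have h1 : ∑ z, v z = ∑ t, (∑ z, B z t) * u t := by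
      rw [hv]
      simp only [mulVec_apply']
      rw [Finset.sum_comm]
      exact Finset.sum_congr rfl fun t _ => by rw [Finset.sum_mul]
    have hcol : ∀ t, ∑ z, B z t = (Fintype.card V : ℝ)⁻¹ := by
      intro t
      have h2 : ∑ z, B z t = ∑ z, B t z :=
        Finset.sum_congr rfl fun z _ => by rw [hB, Binv_symm c hsym z t]
      have h3 : (B *ᵥ fun _ => (1:ℝ)) t = ∑ z, B t z := by
        rw [mulVec_apply']
        simp
      rw [h2, ← h3, hBones]
    rw [h1, Finset.sum_congr rfl fun t _ => by rw [hcol t], ← Finset.mul_sum, hsumu,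
      mul_zero]
  have hNmv : Nm c *ᵥ v = u := by
    rw [hv, hB, Matrix.mulVec_mulVec, Nm_mul_inv c hpd, Matrix.one_mulVec]
  have hLv : ∀ z, nodeWeight c z * v z - ∑ t, c z t * v t = u z := by
    intro z
    have h1 := congrFun hNmv z
    rw [Nm_mulVec, hsumv, add_zero, lap_mulVec] at h1
    exact h1
  set w : V → ℝ := fun z => nodeWeight c x * (v z - v y) with hw
  have hwz : ∀ z, w z = nodeWeight c x * (v z - v y) := fun _ => rfl
  have hAw : (1 - killed c y) *ᵥ w = fun z => if z = x then (1:ℝ) else 0 := by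
    funext z
    rw [Matrix.sub_mulVec, Matrix.one_mulVec, Pi.sub_apply]
    by_cases hzy : z = y
    · have hQrow : (killed c y *ᵥ w) z = 0 := by
        rw [mulVec_apply']
        exact Finset.sum_eq_zero fun t _ => by
          rw [killed_apply, if_pos hzy, zero_mul]
      rw [hQrow, sub_zero, hwz, hzy, sub_self, mul_zero, if_neg (Ne.symm hxy)]
    · have hμz := hμ z
      have h1 : (killed c y *ᵥ w) z = (∑ t, c z t * w t) / nodeWeight c z := by
        rw [mulVec_apply']
        have hcg : ∀ t ∈ (univ : Finset V), killed c y z t * w t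
            = c z t * w t / nodeWeight c z := by
          intro t _
          rw [killed_apply, if_neg hzy, div_mul_eq_mul_div]
        rw [Finset.sum_congr rfl hcg]
        exact (Finset.sum_div _ _ _).symm
      have h2 : ∑ t, c z t * w t
          = nodeWeight c x * (∑ t, c z t * v t) - nodeWeight c x * v y * nodeWeight c z := by
        have hrhs : nodeWeight c x * v y * nodeWeight c z
            = ∑ t, nodeWeight c x * v y * c z t := by
          have hNz : nodeWeight c z = ∑ t, c z t := rfl
          rw [hNz, Finset.mul_sum]
        rw [hrhs, Finset.mul_sum, ← Finset.sum_sub_distrib]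
        refine Finset.sum_congr rfl fun t _ => ?_
        rw [hwz]
        ring
      have hS : ∑ t, c z t * v t = nodeWeight c z * v z - u z := by
        have := hLv z
        linarith
      have huz : u z = if z = x then (1:ℝ) else 0 := by
        rw [hu]
        simp [hzy]
      rw [h1, h2, hS, hwz, huz]
      by_cases hzx : z = x
      · rw [if_pos hzx, hzx]
        have h5 : nodeWeight c x ≠ 0 := (hμ x).ne'
        field_simp
        ring
      · rw [if_neg hzx]
        have h5 : nodeWeight c z ≠ 0 := (hμ z).ne'
        field_simp
        ring
  have hwG : w = (∑' k : ℕ, killed c y ^ k) *ᵥ (fun z => if z = x then (1:ℝ) else 0) := by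
    calc w = (1 : Matrix V V ℝ) *ᵥ w := (Matrix.one_mulVec w).symm
      _ = ((∑' k : ℕ, killed c y ^ k) * (1 - killed c y)) *ᵥ w := by rw [hGA]
      _ = (∑' k : ℕ, killed c y ^ k) *ᵥ ((1 - killed c y) *ᵥ w) := by
          rw [Matrix.mulVec_mulVec]
      _ = (∑' k : ℕ, killed c y ^ k) *ᵥ (fun z => if z = x then (1:ℝ) else 0) := by
          rw [hAw]
  have hGxx : (∑' k : ℕ, killed c y ^ k) x x = w x := by
    have h1 := congrFun hwG x
    rw [h1, mulVec_apply']
    simp [mul_ite, Finset.sum_ite_eq']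
  have hvis1 : visitExp c x y x = w x := by
    rw [visitExp, if_neg hxy, hentry, hGxx]
  have hvis2 : visitExp c y x x = 0 := by rw [visitExp, if_pos rfl]
  simp only [effRes]
  rw [hvis1, hvis2, add_zero, hwz, mul_comm, mul_div_assoc, div_self (hμ x).ne', mul_one]
  have hvx : v x = B x x - B x y := by
    rw [hv, mulVec_apply']
    simp only [hu, mul_sub, mul_ite, mul_one, mul_zero]
    rw [Finset.sum_sub_distrib]
    simp [Finset.sum_ite_eq']
  have hvy : v y = B y x - B y y := by
    rw [hv, mulVec_apply']
    simp only [hu, mul_sub, mul_ite, mul_one, mul_zero]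
    rw [Finset.sum_sub_distrib]
    simp [Finset.sum_ite_eq']
  rw [hvx, hvy]
  ring

end NormPart

lemma effRes_self (c : V → V → ℝ) (a : V) : effRes c a a * c a a = 0 := by
  simp [effRes, visitExp]

lemma effRes_mul_symm (c : V → V → ℝ) (hsym : ∀ u v, c u v = c v u)
    (hnn : ∀ u v, 0 ≤ c u v)
    (hconn : (SimpleGraph.fromRel fun u v : V => 0 < c u v).Connected)
    (hcard : 2 ≤ Fintype.card V) (u v : V) :
    effRes c u v * c u v = effRes c v u * c v u := by
  by_cases huv : u = v
  · subst huv; rfl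
  · rw [effRes_eq c hsym hnn hconn hcard huv,
      effRes_eq c hsym hnn hconn hcard (Ne.symm huv), hsym u v]
    ring

lemma ordered_sum (c : V → V → ℝ) (hsym : ∀ u v, c u v = c v u)
    (hnn : ∀ u v, 0 ≤ c u v)
    (hconn : (SimpleGraph.fromRel fun u v : V => 0 < c u v).Connected)
    (hcard : 2 ≤ Fintype.card V) :
    ∑ x : V, ∑ y : V, effRes c x y * c x y = 2 * ((Fintype.card V : ℝ) - 1) := by
  classical
  set B := (Nm c)⁻¹ with hB
  have hpd := Nm_posdef c hsym hnn hconn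
  have hcard0 : (Fintype.card V : ℝ) ≠ 0 := Nat.cast_ne_zero.2 (by omega)
  have hBones := Binv_mulVec_one c hpd hcard0
  have hg : ∀ x y : V, effRes c x y * c x y
      = (B x x + B y y - B x y - B y x) * c x y := by
    intro x y
    by_cases hxy : x = y
    · subst hxy
      rw [effRes_self]
      ring
    · rw [effRes_eq c hsym hnn hconn hcard hxy, hB]
  have hper : ∀ x, B x x * nodeWeight c x - ∑ y, B x y * c x y
      = 1 - (Fintype.card V : ℝ)⁻¹ := by
    intro x
    have h1 : (B * Nm c) x x = 1 := by
      rw [hB, inv_mul_Nm c hpd, Matrix.one_apply_eq]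
    have h2 : (B * Nm c) x x
        = (B x x * nodeWeight c x - ∑ y, B x y * c x y) + ∑ y, B x y := by
      rw [Matrix.mul_apply]
      have hterm : ∀ y ∈ (univ : Finset V), B x y * Nm c y x
          = (B x y * (if y = x then nodeWeight c y else 0) - B x y * c y x) + B x y := by
        intro y _
        have hNyx : Nm c y x = ((if y = x then nodeWeight c y else 0) - c y x) + 1 := by
          rw [Nm, Matrix.add_apply, lap_apply, Matrix.of_apply]
        rw [hNyx]
        ring
      rw [Finset.sum_congr rfl hterm, Finset.sum_add_distrib, Finset.sum_sub_distrib]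
      congr 2
      · simp [mul_ite, mul_zero, Finset.sum_ite_eq']
      · exact Finset.sum_congr rfl fun y _ => by rw [hsym y x]
    have h3 : ∑ y, B x y = (Fintype.card V : ℝ)⁻¹ := by
      have h4 := congrFun hBones x
      rw [mulVec_apply'] at h4
      simpa using h4
    rw [h2, h3] at h1
    linarith
  have hsplit : ∀ x, ∑ y, (B x x + B y y - B x y - B y x) * c x y
      = B x x * nodeWeight c x + (∑ y, B y y * c x y)
        - (∑ y, B x y * c x y) - (∑ y, B y x * c x y) := by
    intro x
    have hterm : ∀ y ∈ (univ : Finset V), (B x x + B y y - B x y - B y x) * c x y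
        = ((B x x * c x y + B y y * c x y) - B x y * c x y) - B y x * c x y := by
      intro y _; ring
    rw [Finset.sum_congr rfl hterm, Finset.sum_sub_distrib, Finset.sum_sub_distrib,
      Finset.sum_add_distrib]
    congr 2
    rw [nodeWeight, Finset.mul_sum]
  have hS4 : ∀ x, ∑ y, B y x * c x y = ∑ y, B x y * c x y := by
    intro x
    exact Finset.sum_congr rfl fun y _ => by rw [hB, Binv_symm c hsym y x]
  have hS2 : ∑ x, ∑ y, B y y * c x y = ∑ x, B x x * nodeWeight c x := by
    rw [Finset.sum_comm]
    refine Finset.sum_congr rfl fun y _ => ?_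
    rw [nodeWeight, Finset.mul_sum]
    exact Finset.sum_congr rfl fun x _ => by rw [hsym y x]
  calc ∑ x : V, ∑ y : V, effRes c x y * c x y
      = ∑ x : V, ∑ y : V, (B x x + B y y - B x y - B y x) * c x y :=
        Finset.sum_congr rfl fun x _ => Finset.sum_congr rfl fun y _ => hg x y
    _ = ∑ x : V, ((B x x * nodeWeight c x - ∑ y, B x y * c x y)
          + (∑ y, B y y * c x y - ∑ y, B x y * c x y)) := by
        refine Finset.sum_congr rfl fun x _ => ?_
        rw [hsplit x, hS4 x]
        ring
    _ = ∑ x : V, (B x x * nodeWeight c x - ∑ y, B x y * c x y)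
        + ((∑ x : V, ∑ y, B y y * c x y) - ∑ x : V, ∑ y, B x y * c x y) := by
        rw [Finset.sum_add_distrib, Finset.sum_sub_distrib, Finset.sum_sub_distrib]
    _ = (((Fintype.card V : ℝ)) - 1) + (((Fintype.card V : ℝ)) - 1) := by
        have hT : ∑ x : V, (B x x * nodeWeight c x - ∑ y, B x y * c x y)
            = (Fintype.card V : ℝ) - 1 := by
          rw [Finset.sum_congr rfl fun x _ => hper x, Finset.sum_const, nsmul_eq_mul,
            Finset.card_univ, mul_sub, mul_one, mul_inv_cancel₀ hcard0]
        have hT2 : (∑ x : V, ∑ y, B y y * c x y) - ∑ x : V, ∑ y, B x y * c x y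
            = (Fintype.card V : ℝ) - 1 := by
          rw [hS2, ← Finset.sum_sub_distrib, hT]
        rw [hT, hT2]
    _ = 2 * ((Fintype.card V : ℝ) - 1) := by ring

lemma sym2_double (g : V → V → ℝ) (hgs : ∀ u v, g u v = g v u)
    (hd : ∀ u, g u u = 0) :
    2 * ∑ e : Sym2 V, g (Quot.out e).1 (Quot.out e).2 = ∑ x : V, ∑ y : V, g x y := by
  classical
  have hout : ∀ (a b : V),
      g (Quot.out (s(a,b) : Sym2 V)).1 (Quot.out (s(a,b) : Sym2 V)).2 = g a b := by
    intro a b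
    have h2 : s((Quot.out (s(a,b) : Sym2 V)).1, (Quot.out (s(a,b) : Sym2 V)).2) = s(a, b) :=
      Quot.out_eq _
    rcases (Sym2.mk_eq_mk_iff (p := Quot.out (s(a,b) : Sym2 V)) (q := (a, b))).1 h2 with h3 | h3
    · rw [h3]
    · rw [h3]
      exact hgs b a
  have key : ∀ e : Sym2 V,
      ∑ p ∈ univ.filter (fun p : V × V => Sym2.mk p.1 p.2 = e), g p.1 p.2
        = 2 * g (Quot.out e).1 (Quot.out e).2 := by
    intro e
    induction e using Sym2.ind with
    | _ a b =>
      rw [hout a b]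
      by_cases hab : a = b
      · subst hab
        have hfil : univ.filter (fun p : V × V => Sym2.mk p.1 p.2 = s(a,a)) = {(a,a)} := by
          ext ⟨p1, p2⟩
          simp only [Finset.mem_filter, mem_univ, true_and, Finset.mem_singleton,
            Sym2.eq_iff, Prod.mk.injEq]
          constructor
          · rintro (h | h) <;> exact h
          · intro h; exact Or.inl h
        rw [hfil, Finset.sum_singleton]
        simp [hd a]
      · have hfil : univ.filter (fun p : V × V => Sym2.mk p.1 p.2 = s(a,b))
            = {(a,b), (b,a)} := by
          ext ⟨p1, p2⟩
          simp only [Finset.mem_filter, mem_univ, true_and, Finset.mem_insert,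
            Finset.mem_singleton, Sym2.eq_iff, Prod.mk.injEq]
        rw [hfil, Finset.sum_insert (by
          simp only [Finset.mem_singleton, Prod.mk.injEq, not_and]
          intro h; exact absurd h hab)]
        rw [Finset.sum_singleton]
        have := hgs b a
        simp only []
        rw [this]
        ring
  have hfib : ∑ p : V × V, g p.1 p.2
      = ∑ e : Sym2 V, ∑ p ∈ univ.filter (fun p : V × V => Sym2.mk p.1 p.2 = e), g p.1 p.2 :=
    (Finset.sum_fiberwise_of_maps_to (fun p _ => mem_univ (Sym2.mk p.1 p.2)) _).symm
  calc 2 * ∑ e : Sym2 V, g (Quot.out e).1 (Quot.out e).2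
      = ∑ e : Sym2 V, 2 * g (Quot.out e).1 (Quot.out e).2 := by rw [Finset.mul_sum]
    _ = ∑ e : Sym2 V, ∑ p ∈ univ.filter (fun p : V × V => Sym2.mk p.1 p.2 = e), g p.1 p.2 :=
        (Finset.sum_congr rfl fun e _ => key e).symm
    _ = ∑ p : V × V, g p.1 p.2 := hfib.symm
    _ = ∑ x : V, ∑ y : V, g x y := Fintype.sum_prod_type _

end Foster7

/-- **Foster-type identity for weighted graphs.** For a finite connected
weighted graph with `n` vertices, the effective resistances satisfy
`∑_{{x,y} ∈ E} R_{xy} · c_{xy} = n − 1`, the sum being over unordered edges. The sum is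
taken over all unordered pairs `e : Sym2 V` (represented by `Quot.out e`); pairs that are
not edges contribute `0` since `c_{xy} = 0` there. -/
theorem foster_identity_weighted
    (c : V → V → ℝ) (hsym : ∀ u v, c u v = c v u) (hnn : ∀ u v, 0 ≤ c u v)
    (hconn : (SimpleGraph.fromRel fun u v : V => 0 < c u v).Connected) :
    ∑ e : Sym2 V, effRes c (Quot.out e).1 (Quot.out e).2 * c (Quot.out e).1 (Quot.out e).2
      = (Fintype.card V : ℝ) - 1 := by
  classical
  rcases le_or_gt 2 (Fintype.card V) with hcard | hcard
  · have hgs := Foster7.effRes_mul_symm c hsym hnn hconn hcard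
    have hd := Foster7.effRes_self c
    have hdbl := Foster7.sym2_double (fun u v => effRes c u v * c u v) hgs hd
    have hord := Foster7.ordered_sum c hsym hnn hconn hcard
    rw [hord] at hdbl
    linarith
  · have hpos : 0 < Fintype.card V := Fintype.card_pos_iff.2 hconn.nonempty
    have h1 : Fintype.card V = 1 := by omega
    haveI hss : Subsingleton V := Fintype.card_le_one_iff_subsingleton.1 (by omega)
    have hz : ∀ e : Sym2 V,
        effRes c (Quot.out e).1 (Quot.out e).2 * c (Quot.out e).1 (Quot.out e).2 = 0 := by
      intro e
      rw [show (Quot.out e).1 = (Quot.out e).2 from Subsingleton.elim _ _]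
      exact Foster7.effRes_self c _
    rw [Finset.sum_congr rfl fun e _ => hz e, Finset.sum_const, smul_zero, h1]
    norm_num
end

section
/- The limit degree distribution of the preferential attachment model is a probability distribution: for every integer m ≥ 1 and real δ > −m, the numbers p_k = (2 + δ/m) · Γ(k+δ)Γ(m+2+δ+δ/m) / (Γ(m+δ)Γ(k+3+δ+δ/m)) for k ≥ m (and p_k = 0 for k < m) are nonnegative and satisfy ∑_{k=m}^{∞} p_k = 1. -/
/-- The limiting degree distribution of the preferential attachment model with parameters
`m ≥ 1` and `δ > −m`: `p_k = 0` for `k < m` and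
`p_k = (2 + δ/m) · Γ(k+δ)Γ(m+2+δ+δ/m) / (Γ(m+δ)Γ(k+3+δ+δ/m))` for `k ≥ m`. -/
noncomputable def paLimitDist (m : ℕ) (δ : ℝ) (k : ℕ) : ℝ :=
  if k < m then 0
  else (2 + δ / m) *
    (Real.Gamma ((k : ℝ) + δ) * Real.Gamma ((m : ℝ) + 2 + δ + δ / m)) /
      (Real.Gamma ((m : ℝ) + δ) * Real.Gamma ((k : ℝ) + 3 + δ + δ / m))

/-- The limit degree distribution of the preferential attachment model is
a probability distribution: for every integer `m ≥ 1` and real `δ > −m`, the numbers `p_k`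
are nonnegative and satisfy `∑_{k=m}^∞ p_k = 1` (equivalently, `∑_{k=0}^∞ p_k = 1` since
`p_k = 0` for `k < m`). -/
theorem pa_limit_dist_is_probability_distribution (m : ℕ) (hm : 1 ≤ m)
    (δ : ℝ) (hδ : -(m : ℝ) < δ) :
    (∀ k : ℕ, 0 ≤ paLimitDist m δ k) ∧ ∑' k : ℕ, paLimitDist m δ k = 1 := by
  have hm0 : (0:ℝ) < m := by exact_mod_cast hm
  have hmδ : (0:ℝ) < (m:ℝ) + δ := by linarith
  obtain ⟨b, hbdef⟩ : ∃ b : ℝ, b = δ / m := ⟨_, rfl⟩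
  have hb : -1 < b := by
    rw [hbdef, lt_div_iff₀ hm0]
    linarith
  -- positivity of Gamma at the relevant arguments
  have hargk : ∀ k : ℕ, m ≤ k → (0:ℝ) < (k:ℝ) + δ := by
    intro k hk
    have : (m:ℝ) ≤ k := by exact_mod_cast hk
    linarith
  have hGpos : ∀ x : ℝ, 0 < x → 0 < Real.Gamma x := fun x hx => Real.Gamma_pos_of_pos hx
  have hnonneg : ∀ k : ℕ, 0 ≤ paLimitDist m δ k := by
    intro k
    unfold paLimitDist
    split
    · exact le_refl 0
    · rename_i h
      push_neg at h
      have hk : (0:ℝ) < (k:ℝ) + δ := hargk k h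
      have h1 : (0:ℝ) < (m:ℝ) + 2 + δ + b := by linarith
      have h2 : (0:ℝ) < (k:ℝ) + 3 + δ + b := by linarith
      have h2b : (0:ℝ) < 2 + δ / m := by rw [hbdef] at hb; linarith
      have hAB : (0:ℝ) < (2 + δ / m) * (Real.Gamma ((k:ℝ) + δ) *
          Real.Gamma ((m:ℝ) + 2 + δ + δ / m)) :=
        mul_pos h2b (mul_pos (hGpos _ hk) (by rw [← hbdef]; exact hGpos _ h1))
      have hCD : (0:ℝ) < Real.Gamma ((m:ℝ) + δ) * Real.Gamma ((k:ℝ) + 3 + δ + δ / m) :=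
        mul_pos (hGpos _ hmδ) (by rw [← hbdef]; exact hGpos _ h2)
      exact le_of_lt (div_pos hAB hCD)
  refine ⟨hnonneg, ?_⟩
  -- the telescoping sequence
  set f : ℕ → ℝ := fun n => Real.Gamma ((n:ℝ) + m + δ) / Real.Gamma ((n:ℝ) + m + 2 + δ + b)
    with hfdef
  have hfpos : ∀ n : ℕ, 0 < f n := by
    intro n
    have hn0 : (0:ℝ) ≤ n := Nat.cast_nonneg n
    have h1 : (0:ℝ) < (n:ℝ) + m + δ := by linarith
    have h2 : (0:ℝ) < (n:ℝ) + m + 2 + δ + b := by linarith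
    exact div_pos (hGpos _ h1) (hGpos _ h2)
  set C : ℝ := Real.Gamma ((m:ℝ) + 2 + δ + b) / Real.Gamma ((m:ℝ) + δ) with hCdef
  have hkey : ∀ n : ℕ, paLimitDist m δ (n + m) = C * (f n - f (n + 1)) := by
    intro n
    have hn0 : (0:ℝ) ≤ n := Nat.cast_nonneg n
    have hx : (0:ℝ) < (n:ℝ) + m + δ := by linarith
    have hy : (0:ℝ) < (n:ℝ) + m + 2 + δ + b := by linarith
    have hGx := hGpos _ hx
    have hGy := hGpos _ hy
    have hGm := hGpos _ hmδ
    -- recurrences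
    have hrec1 : Real.Gamma ((n:ℝ) + m + δ + 1) = ((n:ℝ) + m + δ) * Real.Gamma ((n:ℝ) + m + δ) :=
      Real.Gamma_add_one (ne_of_gt hx)
    have hrec2 : Real.Gamma ((n:ℝ) + m + 2 + δ + b + 1)
        = ((n:ℝ) + m + 2 + δ + b) * Real.Gamma ((n:ℝ) + m + 2 + δ + b) :=
      Real.Gamma_add_one (ne_of_gt hy)
    have hnm : ¬ (n + m < m) := by omega
    unfold paLimitDist
    rw [if_neg hnm]
    have hcast : ((n + m : ℕ) : ℝ) = (n:ℝ) + m := by push_cast; ring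
    rw [hcast, hfdef, hCdef, ← hbdef]
    simp only
    have e1 : ((n:ℝ) + 1) + m + δ = (n:ℝ) + m + δ + 1 := by ring
    have e2 : ((n:ℝ) + 1) + m + 2 + δ + b = (n:ℝ) + m + 2 + δ + b + 1 := by ring
    have e3 : (n:ℝ) + m + 3 + δ + b = (n:ℝ) + m + 2 + δ + b + 1 := by ring
    push_cast
    rw [e1, e2, e3, hrec1, hrec2]
    generalize Real.Gamma ((n:ℝ) + m + δ) = G1 at *
    generalize Real.Gamma ((n:ℝ) + m + 2 + δ + b) = G2 at *
    generalize Real.Gamma ((m:ℝ) + δ) = GM at *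
    field_simp
    ring
  -- f tends to 0
  have hftend : Filter.Tendsto f Filter.atTop (nhds 0) := by
    have hbound : ∀ᶠ n : ℕ in Filter.atTop, f n ≤ 1 / ((n:ℝ) + m + δ) := by
      filter_upwards [Filter.eventually_ge_atTop (Nat.ceil (2 - δ + |b| + 2) + m + 2)] with n hn
      have hn' : (2:ℝ) - δ + |b| + 2 ≤ n := by
        have h1 : (Nat.ceil (2 - δ + |b| + 2) : ℝ) ≤ n := by
          have : Nat.ceil (2 - δ + |b| + 2) ≤ n := by omega
          exact_mod_cast this
        exact le_trans (Nat.le_ceil _) h1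
      have habs : b ≤ |b| := le_abs_self b
      have habs' : -|b| ≤ b := neg_abs_le b
      have hx2 : (2:ℝ) ≤ (n:ℝ) + m + δ + 1 := by linarith
      have hy2 : (2:ℝ) ≤ (n:ℝ) + m + 2 + δ + b := by linarith
      have hlt : (n:ℝ) + m + δ + 1 < (n:ℝ) + m + 2 + δ + b := by linarith
      have hmono := Real.Gamma_strictMonoOn_Ici (Set.mem_Ici.mpr hx2) (Set.mem_Ici.mpr hy2) hlt
      have hx : (0:ℝ) < (n:ℝ) + m + δ := by
        have := Nat.cast_nonneg (α := ℝ) n; linarith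
      have hrec : Real.Gamma ((n:ℝ) + m + δ + 1) = ((n:ℝ) + m + δ) * Real.Gamma ((n:ℝ) + m + δ) :=
        Real.Gamma_add_one (ne_of_gt hx)
      have hGx := hGpos _ hx
      have hGy : (0:ℝ) < Real.Gamma ((n:ℝ) + m + 2 + δ + b) := by
        apply hGpos; linarith
      rw [hfdef]
      simp only
      rw [div_le_div_iff₀ hGy hx, one_mul]
      calc Real.Gamma ((n:ℝ) + m + δ) * ((n:ℝ) + m + δ)
          = Real.Gamma ((n:ℝ) + m + δ + 1) := by rw [hrec]; ring
        _ ≤ Real.Gamma ((n:ℝ) + m + 2 + δ + b) := le_of_lt hmono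
    have h0 : ∀ᶠ n : ℕ in Filter.atTop, 0 ≤ f n :=
      Filter.Eventually.of_forall fun n => (hfpos n).le
    have hlim : Filter.Tendsto (fun n : ℕ => 1 / ((n:ℝ) + m + δ)) Filter.atTop (nhds 0) := by
      simp only [one_div]
      exact tendsto_inv_atTop_zero.comp
        (Filter.tendsto_atTop_add_const_right _ _
          (Filter.tendsto_atTop_add_const_right _ _ tendsto_natCast_atTop_atTop))
    exact squeeze_zero' h0 hbound hlim
  -- telescoping sum
  have hCf0 : C * f 0 = 1 := by
    rw [hCdef, hfdef]
    simp only [Nat.cast_zero, zero_add]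
    have h1 := hGpos _ hmδ
    have h2 : (0:ℝ) < Real.Gamma ((m:ℝ) + 2 + δ + b) := by apply hGpos; linarith
    field_simp
  have hsum_shift : HasSum (fun n : ℕ => paLimitDist m δ (n + m)) 1 := by
    have hnn : ∀ n : ℕ, 0 ≤ paLimitDist m δ (n + m) := fun n => hnonneg (n + m)
    rw [hasSum_iff_tendsto_nat_of_nonneg hnn]
    have hps : ∀ N : ℕ, ∑ n ∈ Finset.range N, paLimitDist m δ (n + m) = C * (f 0 - f N) := by
      intro N
      calc ∑ n ∈ Finset.range N, paLimitDist m δ (n + m)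
          = ∑ n ∈ Finset.range N, C * (f n - f (n + 1)) :=
            Finset.sum_congr rfl fun n _ => hkey n
        _ = C * ∑ n ∈ Finset.range N, (f n - f (n + 1)) := by rw [Finset.mul_sum]
        _ = C * (f 0 - f N) := by rw [Finset.sum_range_sub' f N]
    simp only [hps]
    have : Filter.Tendsto (fun N : ℕ => C * (f 0 - f N)) Filter.atTop (nhds (C * (f 0 - 0))) :=
      (Filter.Tendsto.const_mul C ((tendsto_const_nhds).sub hftend))
    simpa [hCf0] using this
  have hsum : HasSum (paLimitDist m δ) 1 := by
    have := (hasSum_nat_add_iff (f := paLimitDist m δ) m).mp hsum_shift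
    have hzero : ∑ i ∈ Finset.range m, paLimitDist m δ i = 0 := by
      apply Finset.sum_eq_zero
      intro i hi
      unfold paLimitDist
      rw [if_pos (Finset.mem_range.mp hi)]
    rwa [hzero, add_zero] at this
  exact hsum.tsum_eq
end

section
/- Power-law asymptotics of the limit degree distribution: for every integer m ≥ 1 and real δ > −m, with p_k = (2 + δ/m) · Γ(k+δ)Γ(m+2+δ+δ/m) / (Γ(m+δ)Γ(k+3+δ+δ/m)) for k ≥ m, one has lim_{k→∞} k^{3+δ/m} · p_k = (2 + δ/m) · Γ(m+2+δ+δ/m)/Γ(m+δ). In other words, p_k ~ c_{m,δ} · k^{−τ} as k → ∞ with τ = 3 + δ/m and c_{m,δ} = (2+δ/m)Γ(m+2+δ+δ/m)/Γ(m+δ), so the preferential attachment graph is scale free with exponent τ = 3 + δ/m. -/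
open Filter Real Topology

/-- Wendel's inequality, upper bound: for `0 < x` and `0 < a < 1`,
`Γ(x+a) ≤ Γ(x) · x^a`. -/
lemma wendel_upper {x a : ℝ} (hx : 0 < x) (ha : 0 < a) (ha1 : a < 1) :
    Real.Gamma (x + a) ≤ Real.Gamma x * x ^ a := by
  have h := Real.Gamma_mul_add_mul_le_rpow_Gamma_mul_rpow_Gamma hx
    (by linarith : (0:ℝ) < x + 1) (by linarith : (0:ℝ) < 1 - a) ha (by ring)
  rw [show (1 - a) * x + a * (x + 1) = x + a by ring, Real.Gamma_add_one hx.ne'] at h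
  have hΓ : 0 < Real.Gamma x := Real.Gamma_pos_of_pos hx
  calc Real.Gamma (x + a) ≤ Real.Gamma x ^ (1 - a) * (x * Real.Gamma x) ^ a := h
    _ = Real.Gamma x * x ^ a := by
        rw [Real.mul_rpow hx.le hΓ.le, ← mul_assoc,
          mul_comm (Real.Gamma x ^ (1 - a)) (x ^ a), mul_assoc,
          ← Real.rpow_add hΓ]
        norm_num
        ring

/-- Wendel's inequality, lower bound form: for `0 < x` and `0 < a < 1`,
`x · Γ(x) ≤ Γ(x+a) · (x+a)^(1-a)`. -/
lemma wendel_lower {x a : ℝ} (hx : 0 < x) (ha : 0 < a) (ha1 : a < 1) :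
    x * Real.Gamma x ≤ Real.Gamma (x + a) * (x + a) ^ (1 - a) := by
  have h := wendel_upper (x := x + a) (a := 1 - a) (by linarith) (by linarith) (by linarith)
  rw [show x + a + (1 - a) = x + 1 by ring, Real.Gamma_add_one hx.ne'] at h
  exact h

lemma tendsto_div_add (c : ℝ) :
    Tendsto (fun x : ℝ => x / (x + c)) atTop (𝓝 1) := by
  have h1 : Tendsto (fun x : ℝ => 1 - c / (x + c)) atTop (𝓝 1) := by
    have := (tendsto_const_nhds (x := c) (f := atTop (α := ℝ))).div_atTop
      (tendsto_atTop_add_const_right atTop c tendsto_id)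
    simpa using tendsto_const_nhds.sub this
  refine h1.congr' ?_
  filter_upwards [eventually_gt_atTop (max 0 (-c))] with x hx
  have hxc : 0 < x + c := by
    have := lt_of_le_of_lt (le_max_right 0 (-c)) hx; linarith
  field_simp
  ring

lemma tendsto_add_div (c : ℝ) :
    Tendsto (fun x : ℝ => (x + c) / x) atTop (𝓝 1) := by
  have h1 : Tendsto (fun x : ℝ => 1 + c / x) atTop (𝓝 1) := by
    have := (tendsto_const_nhds (x := c) (f := atTop (α := ℝ))).div_atTop tendsto_id
    simpa using tendsto_const_nhds.add this
  refine h1.congr' ?_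
  filter_upwards [eventually_gt_atTop 0] with x hx
  field_simp

/-- The ratio `Γ(x+a) / (Γ(x) x^a)` tends to 1, case `0 ≤ a ≤ 1`. -/
lemma tendsto_gamma_ratio_base {a : ℝ} (h0 : 0 ≤ a) (h1 : a ≤ 1) :
    Tendsto (fun x : ℝ => Real.Gamma (x + a) / (Real.Gamma x * x ^ a)) atTop (𝓝 1) := by
  rcases eq_or_lt_of_le h0 with h0 | h0
  · apply tendsto_const_nhds.congr'
    filter_upwards [eventually_gt_atTop 0] with x hx
    rw [← h0]
    have : Real.Gamma x ≠ 0 := (Real.Gamma_pos_of_pos hx).ne'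
    simp [this]
  rcases eq_or_lt_of_le h1 with h1 | h1
  · apply tendsto_const_nhds.congr'
    filter_upwards [eventually_gt_atTop 0] with x hx
    rw [h1, Real.Gamma_add_one hx.ne', Real.rpow_one]
    field_simp [(Real.Gamma_pos_of_pos hx).ne', hx.ne']
  -- 0 < a < 1 : squeeze
  have hlow : Tendsto (fun x : ℝ => (x / (x + a)) ^ (1 - a)) atTop (𝓝 1) := by
    have := (tendsto_div_add a).rpow_const (p := 1 - a) (Or.inl one_ne_zero)
    simpa using this
  refine tendsto_of_tendsto_of_tendsto_of_le_of_le' hlow tendsto_const_nhds ?_ ?_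
  · filter_upwards [eventually_gt_atTop 0] with x hx
    have hxa : 0 < x + a := by linarith
    have hΓ : 0 < Real.Gamma x := Real.Gamma_pos_of_pos hx
    have hxp : 0 < x ^ a := Real.rpow_pos_of_pos hx a
    have key := wendel_lower hx h0 h1
    rw [Real.div_rpow hx.le hxa.le]
    rw [div_le_div_iff₀ (Real.rpow_pos_of_pos hxa _) (by positivity)]
    -- x^(1-a) * (Γ x * x^a) ≤ Γ(x+a) * (x+a)^(1-a)
    calc x ^ (1 - a) * (Real.Gamma x * x ^ a)
        = x * Real.Gamma x := by
          rw [mul_comm (Real.Gamma x) (x ^ a), ← mul_assoc, ← Real.rpow_add hx]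
          norm_num
      _ ≤ Real.Gamma (x + a) * (x + a) ^ (1 - a) := key
  · filter_upwards [eventually_gt_atTop 0] with x hx
    have hΓ : 0 < Real.Gamma x := Real.Gamma_pos_of_pos hx
    rw [div_le_one (by positivity)]
    exact wendel_upper hx h0 h1

/-- The ratio `Γ(x+a) / (Γ(x) x^a)` tends to 1 for any `a ≥ 0`. -/
lemma tendsto_gamma_ratio {a : ℝ} (h0 : 0 ≤ a) :
    Tendsto (fun x : ℝ => Real.Gamma (x + a) / (Real.Gamma x * x ^ a)) atTop (𝓝 1) := by
  obtain ⟨n, hn⟩ : ∃ n : ℕ, a ≤ n := exists_nat_ge a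
  induction n generalizing a with
  | zero => exact tendsto_gamma_ratio_base h0 (by exact_mod_cast hn.trans (by norm_num))
  | succ n ih =>
    rcases le_or_gt a 1 with h1 | h1
    · exact tendsto_gamma_ratio_base h0 h1
    · have ih' := ih (a := a - 1) (by linarith) (by push_cast at hn ⊢; linarith)
      have hmul : Tendsto (fun x : ℝ =>
          (Real.Gamma (x + (a - 1)) / (Real.Gamma x * x ^ (a - 1))) * ((x + (a - 1)) / x))
          atTop (𝓝 1) := by
        simpa using ih'.mul (tendsto_add_div (a - 1))
      refine hmul.congr' ?_
      filter_upwards [eventually_gt_atTop 0] with x hx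
      have hxa : (0:ℝ) < x + (a - 1) := by linarith
      have hΓ : 0 < Real.Gamma x := Real.Gamma_pos_of_pos hx
      have hrec : Real.Gamma (x + a) = (x + (a - 1)) * Real.Gamma (x + (a - 1)) := by
        rw [show x + a = (x + (a - 1)) + 1 by ring, Real.Gamma_add_one hxa.ne']
      have hpow : x ^ a = x ^ (a - 1) * x := by
        rw [← Real.rpow_add_one hx.ne']; ring_nf
      rw [hrec, hpow]
      have hxp : (0:ℝ) < x ^ (a - 1) := Real.rpow_pos_of_pos hx _
      field_simp

/-- **Power-law asymptotics of the limit degree distribution.** For every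
integer `m ≥ 1` and real `δ > −m`,
`lim_{k→∞} k^{3+δ/m} · p_k = (2 + δ/m) · Γ(m+2+δ+δ/m)/Γ(m+δ)`; that is,
`p_k ~ c_{m,δ} k^{−τ}` with `τ = 3 + δ/m` and
`c_{m,δ} = (2+δ/m)Γ(m+2+δ+δ/m)/Γ(m+δ)`: the preferential attachment graph is scale free
with exponent `τ = 3 + δ/m`. -/
theorem pa_limit_dist_power_law (m : ℕ) (hm : 1 ≤ m) (δ : ℝ) (hδ : -(m : ℝ) < δ) :
    Filter.Tendsto (fun k : ℕ => (k : ℝ) ^ ((3 : ℝ) + δ / m) * paLimitDist m δ k)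
      Filter.atTop
      (nhds ((2 + δ / m) * Real.Gamma ((m : ℝ) + 2 + δ + δ / m) /
        Real.Gamma ((m : ℝ) + δ))) := by
  set s : ℝ := 3 + δ / m with hs
  have hm0 : (0:ℝ) < m := by exact_mod_cast hm
  have hsm : -1 < δ / m := by
    rw [neg_lt, ← neg_div]
    exact (div_lt_one hm0).mpr (by linarith)
  have hs0 : 0 ≤ s := by simp only [hs]; linarith
  set C : ℝ := (2 + δ / m) * Real.Gamma ((m : ℝ) + 2 + δ + δ / m) /
    Real.Gamma ((m : ℝ) + δ) with hC
  -- the composed ratio tends to 1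
  have hcomp : Tendsto (fun k : ℕ => (k : ℝ) + δ) atTop atTop :=
    tendsto_atTop_add_const_right atTop δ tendsto_natCast_atTop_atTop
  have hratio : Tendsto (fun k : ℕ =>
      Real.Gamma (((k : ℝ) + δ) + s) / (Real.Gamma ((k : ℝ) + δ) * ((k : ℝ) + δ) ^ s))
      atTop (𝓝 1) := (tendsto_gamma_ratio hs0).comp hcomp
  have hinv : Tendsto (fun k : ℕ =>
      (Real.Gamma (((k : ℝ) + δ) + s) / (Real.Gamma ((k : ℝ) + δ) * ((k : ℝ) + δ) ^ s))⁻¹)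
      atTop (𝓝 1) := by simpa using hratio.inv₀ one_ne_zero
  have hfrac : Tendsto (fun k : ℕ => ((k : ℝ) / ((k : ℝ) + δ)) ^ s) atTop (𝓝 1) := by
    have := ((tendsto_div_add δ).comp tendsto_natCast_atTop_atTop).rpow_const
      (p := s) (Or.inl one_ne_zero)
    simpa using this
  have hmain : Tendsto (fun k : ℕ => C * (((k : ℝ) / ((k : ℝ) + δ)) ^ s *
      (Real.Gamma (((k : ℝ) + δ) + s) / (Real.Gamma ((k : ℝ) + δ) * ((k : ℝ) + δ) ^ s))⁻¹))
      atTop (𝓝 C) := by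
    have := (tendsto_const_nhds (x := C) (f := atTop (α := ℕ))).mul (hfrac.mul hinv)
    simpa using this
  refine hmain.congr' ?_
  have hN : ∀ᶠ k : ℕ in atTop, max m 1 ≤ k := eventually_ge_atTop _
  filter_upwards [hN] with k hk
  have hkm : m ≤ k := le_trans (le_max_left _ _) hk
  have hk1 : 1 ≤ k := le_trans (le_max_right _ _) hk
  have hkpos : (0:ℝ) < k := by exact_mod_cast hk1
  have hkδ : (0:ℝ) < (k : ℝ) + δ := by
    have : (m:ℝ) ≤ k := by exact_mod_cast hkm
    linarith
  have hΓkδ : 0 < Real.Gamma ((k : ℝ) + δ) := Real.Gamma_pos_of_pos hkδ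
  have hΓks : 0 < Real.Gamma (((k : ℝ) + δ) + s) := by
    apply Real.Gamma_pos_of_pos; linarith
  have hkδp : 0 < ((k : ℝ) + δ) ^ s := Real.rpow_pos_of_pos hkδ s
  rw [paLimitDist, if_neg (by omega)]
  have hkey : Real.Gamma ((k : ℝ) + 3 + δ + δ / m) = Real.Gamma (((k : ℝ) + δ) + s) := by
    rw [hs]; ring_nf
  have hksplit : (k : ℝ) ^ s = ((k : ℝ) / ((k : ℝ) + δ)) ^ s * ((k : ℝ) + δ) ^ s := by
    rw [← Real.mul_rpow (div_nonneg hkpos.le hkδ.le) hkδ.le,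
      div_mul_cancel₀ _ hkδ.ne']
  rw [hkey, hC, hksplit]
  field_simp
end
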